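/- arXiv:1406.1610 — 8 statements merged into one kernel-verified Lean document; each statement's English description precedes it below -/
import Mathlib

section
/- Let N ≥ 2 and let F_A : ℝ^N → ℝ be defined on vectors with pairwise distinct coordinates by F_A(v) = (1/2)∑_{i=1}^N v_i² − ∑_{1≤i<j≤N} log|v_j − v_i|. Then for every v ∈ ℝ^N with pairwise distinct coordinates and every u ∈ ℝ^N, the quadratic form of the Hessian of F_A at v satisfies ∑_{1≤i,j≤N} u_i (∂²F_A/∂v_i∂v_j)(v) u_j = ∑_{i=1}^N u_i² + ∑_{1≤i<j≤N} (u_i − u_j)²/(v_i − v_j)², which is strictly positive whenever u ≠ 0; in particular the Hessian of F_A is positive definite at every such v, so every critical point of F_A is a local minimum. -/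
open Finset

private lemma sum_Iio_swap' {N : ℕ} (f : Fin N → Fin N → ℝ) :
    ∑ i, ∑ j ∈ Finset.Iio i, f i j = ∑ i, ∑ j ∈ Finset.Ioi i, f j i := by
  have h1 : ∀ i : Fin N, ∑ j ∈ Finset.Iio i, f i j
      = ∑ j, if j < i then f i j else 0 := by
    intro i
    rw [← Finset.sum_filter]
    congr 1
    ext j; simp [Finset.mem_Iio]
  have h2 : ∀ i : Fin N, ∑ j ∈ Finset.Ioi i, f j i
      = ∑ j, if i < j then f j i else 0 := by
    intro i
    rw [← Finset.sum_filter]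
    congr 1
    ext j; simp [Finset.mem_Ioi]
  simp_rw [h1, h2]
  exact Finset.sum_comm (s := Finset.univ) (t := Finset.univ)
    (f := fun i j => if j < i then f i j else 0)

private lemma quad_identity {N : ℕ} (v u : Fin N → ℝ)
    (hv : ∀ i j : Fin N, i ≠ j → v i ≠ v j) :
    ∑ i, ∑ j, u i * ((Matrix.of fun i j =>
      if i = j then 1 + ∑ l ∈ Finset.univ.erase i, 1 / (v i - v l) ^ 2
      else -(1 / (v i - v j) ^ 2) : Matrix (Fin N) (Fin N) ℝ) i j) * u j
        = ∑ i, (u i) ^ 2 + ∑ i, ∑ j ∈ Finset.Ioi i, (u i - u j) ^ 2 / (v i - v j) ^ 2 := by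
  have herase : ∀ i : Fin N, Finset.univ.erase i = Finset.Iio i ∪ Finset.Ioi i := by
    intro i; ext j
    simp only [Finset.mem_erase, Finset.mem_univ, and_true, Finset.mem_union,
      Finset.mem_Iio, Finset.mem_Ioi]
    exact ne_iff_lt_or_gt
  have hdisj : ∀ i : Fin N, Disjoint (Finset.Iio i) (Finset.Ioi i) := by
    intro i
    refine Finset.disjoint_left.mpr ?_
    intro j hj hj'
    exact absurd (lt_trans (Finset.mem_Iio.mp hj) (Finset.mem_Ioi.mp hj')) (lt_irrefl j)
  have hsplit : ∀ i : Fin N, ∑ j, u i * ((Matrix.of fun i j =>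
      if i = j then 1 + ∑ l ∈ Finset.univ.erase i, 1 / (v i - v l) ^ 2
      else -(1 / (v i - v j) ^ 2) : Matrix (Fin N) (Fin N) ℝ) i j) * u j
      = (u i) ^ 2 + ∑ j ∈ Finset.univ.erase i,
          ((u i) ^ 2 - u i * u j) * (1 / (v i - v j) ^ 2) := by
    intro i
    rw [← Finset.add_sum_erase _ _ (Finset.mem_univ i)]
    simp only [Matrix.of_apply, if_pos rfl]
    have hoff : ∑ j ∈ Finset.univ.erase i, u i * (if i = j then
        1 + ∑ l ∈ Finset.univ.erase i, 1 / (v i - v l) ^ 2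
        else -(1 / (v i - v j) ^ 2)) * u j
        = ∑ j ∈ Finset.univ.erase i, -(u i * u j * (1 / (v i - v j) ^ 2)) := by
      refine Finset.sum_congr rfl ?_
      intro j hj
      rw [if_neg (Ne.symm (Finset.ne_of_mem_erase hj))]
      ring
    rw [hoff]
    calc u i * (1 + ∑ l ∈ Finset.univ.erase i, 1 / (v i - v l) ^ 2) * u i
          + ∑ j ∈ Finset.univ.erase i, -(u i * u j * (1 / (v i - v j) ^ 2))
        = (u i) ^ 2 + (∑ j ∈ Finset.univ.erase i, (u i) ^ 2 * (1 / (v i - v j) ^ 2)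
            + ∑ j ∈ Finset.univ.erase i, -(u i * u j * (1 / (v i - v j) ^ 2))) := by
          rw [← Finset.mul_sum]; ring
      _ = (u i) ^ 2 + ∑ j ∈ Finset.univ.erase i,
            ((u i) ^ 2 * (1 / (v i - v j) ^ 2) + -(u i * u j * (1 / (v i - v j) ^ 2))) := by
          rw [Finset.sum_add_distrib]
      _ = (u i) ^ 2 + ∑ j ∈ Finset.univ.erase i,
            ((u i) ^ 2 - u i * u j) * (1 / (v i - v j) ^ 2) := by
          congr 1
          refine Finset.sum_congr rfl ?_
          intro j _; ring
  rw [Finset.sum_congr rfl (fun i _ => hsplit i), Finset.sum_add_distrib]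
  congr 1
  have : ∀ i : Fin N, ∑ j ∈ Finset.univ.erase i,
      ((u i) ^ 2 - u i * u j) * (1 / (v i - v j) ^ 2)
      = ∑ j ∈ Finset.Iio i, ((u i) ^ 2 - u i * u j) * (1 / (v i - v j) ^ 2)
        + ∑ j ∈ Finset.Ioi i, ((u i) ^ 2 - u i * u j) * (1 / (v i - v j) ^ 2) := by
    intro i
    rw [herase i, Finset.sum_union (hdisj i)]
  rw [Finset.sum_congr rfl (fun i _ => this i), Finset.sum_add_distrib,
    sum_Iio_swap' (fun i j => ((u i) ^ 2 - u i * u j) * (1 / (v i - v j) ^ 2)),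
    ← Finset.sum_add_distrib]
  refine Finset.sum_congr rfl ?_
  intro i _
  rw [← Finset.sum_add_distrib]
  refine Finset.sum_congr rfl ?_
  intro j hj
  have hij : i ≠ j := ne_of_lt (Finset.mem_Ioi.mp hj)
  have hne : v i - v j ≠ 0 := sub_ne_zero.mpr (hv i j hij)
  have hne' : v j - v i ≠ 0 := sub_ne_zero.mpr (hv j i hij.symm)
  field_simp
  ring

/-- positive definiteness of the Hessian of `F_A` at points with
pairwise distinct coordinates.  The Hessian entries are
`1 + ∑_{l≠i} 1/(v_i − v_l)²` on the diagonal and `−1/(v_i − v_j)²` off the diagonal. -/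
theorem hessian_FA_posDef (N : ℕ) (hN : 2 ≤ N) (v u : Fin N → ℝ)
    (hv : ∀ i j : Fin N, i ≠ j → v i ≠ v j) :
    let H : Matrix (Fin N) (Fin N) ℝ := Matrix.of fun i j =>
      if i = j then 1 + ∑ l ∈ Finset.univ.erase i, 1 / (v i - v l) ^ 2
      else -(1 / (v i - v j) ^ 2)
    (∑ i, ∑ j, u i * H i j * u j
        = ∑ i, (u i) ^ 2 + ∑ i, ∑ j ∈ Finset.Ioi i, (u i - u j) ^ 2 / (v i - v j) ^ 2)
    ∧ (u ≠ 0 → 0 < ∑ i, ∑ j, u i * H i j * u j)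
    ∧ H.PosDef := by
  intro H
  have key := quad_identity v u hv
  have hpos : ∀ w : Fin N → ℝ, w ≠ 0 → 0 < ∑ i, ∑ j, w i * H i j * w j := by
    intro w hw
    rw [quad_identity v w hv]
    have h1 : 0 < ∑ i, (w i) ^ 2 := by
      obtain ⟨i, hi⟩ := Function.ne_iff.mp hw
      refine Finset.sum_pos' (fun i _ => sq_nonneg _) ⟨i, Finset.mem_univ i, ?_⟩
      exact lt_of_le_of_ne (sq_nonneg _) (Ne.symm (pow_ne_zero 2 hi))
    have h2 : 0 ≤ ∑ i, ∑ j ∈ Finset.Ioi i, (w i - w j) ^ 2 / (v i - v j) ^ 2 := by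
      refine Finset.sum_nonneg fun i _ => Finset.sum_nonneg fun j _ => ?_
      positivity
    linarith
  refine ⟨key, hpos u, ?_, ?_⟩
  · ext i j
    simp only [Matrix.conjTranspose_apply, H, Matrix.of_apply, star_trivial]
    by_cases h : i = j
    · subst h; simp
    · rw [if_neg (Ne.symm h), if_neg h]
      congr 2
      ring
  · intro x hx
    have : (x.sum fun i xi => x.sum fun j xj => star xi * H i j * xj)
        = ∑ i, ∑ j, x i * H i j * x j := by
      rw [Finsupp.sum_fintype _ _ (by simp)]
      refine Finset.sum_congr rfl fun i _ => ?_
      rw [Finsupp.sum_fintype _ _ (by simp)]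
      simp
    rw [this]
    exact hpos x (fun h => hx (by ext i; exact congrFun h i))
end

section
/- Let N ≥ 2 and let z_1 < z_2 < … < z_N be real numbers satisfying the system z_i = ∑_{j≠i} 1/(z_i − z_j) for every i = 1, …, N. Then z_1, …, z_N are exactly the N zeros of the N-th physicists' Hermite polynomial H_N; equivalently, the monic polynomial ∏_{n=1}^N (x − z_n) equals 2^{−N} H_N(x). -/
open Finset

/-- The physicists' Hermite polynomial `H_N(x) = (−1)^N e^{x²} (d/dx)^N e^{−x²}`. -/
noncomputable def physHermite (N : ℕ) (x : ℝ) : ℝ :=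
  (-1 : ℝ) ^ N * Real.exp (x ^ 2) * iteratedDeriv N (fun y => Real.exp (-(y ^ 2))) x

open Polynomial

noncomputable def hermP : ℕ → Polynomial ℝ
  | 0 => 1
  | n + 1 => 2 * X * hermP n - derivative (hermP n)

lemma hermP_zero : hermP 0 = 1 := rfl
lemma hermP_succ (n : ℕ) : hermP (n + 1) = 2 * X * hermP n - derivative (hermP n) := rfl

lemma hermP_deriv : ∀ n : ℕ, derivative (hermP (n + 1)) = C ((2 : ℝ) * (n + 1)) * hermP n := by
  intro n
  induction n with
  | zero =>
    rw [hermP_succ, hermP_zero]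
    simp only [C_mul, C_add, C_1, map_ofNat, Nat.cast_zero]
    simp
  | succ m ih =>
    rw [hermP_succ (m+1), derivative_sub, derivative_mul, ih, derivative_mul, derivative_mul,
      derivative_C, hermP_succ m]
    simp only [C_mul, C_add, C_1, map_ofNat, derivative_X, derivative_ofNat, derivative_C,
      Nat.cast_add, Nat.cast_one]
    ring

lemma hermP_ode (n : ℕ) :
    derivative (derivative (hermP n)) - 2 * X * derivative (hermP n)
      + C ((2 : ℝ) * n) * hermP n = 0 := by
  cases n with
  | zero => simp [hermP_zero]
  | succ m =>
    rw [hermP_deriv, derivative_mul, derivative_C, zero_mul, zero_add, hermP_succ m]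
    simp only [C_mul, C_add, C_1, map_ofNat, Nat.cast_add, Nat.cast_one]
    ring

lemma hermP_natDegree_le (n : ℕ) : (hermP n).natDegree ≤ n := by
  induction n with
  | zero => simp [hermP_zero]
  | succ m ih =>
    rw [hermP_succ]
    refine le_trans (natDegree_sub_le _ _) (max_le ?_ ?_)
    · refine le_trans (natDegree_mul_le) ?_
      have : (2 * X : Polynomial ℝ).natDegree ≤ 1 := by
        simpa using natDegree_mul_le (p := (2 : Polynomial ℝ)) (q := X)
      omega
    · have := natDegree_derivative_le (hermP m)
      omega

lemma hermP_coeff (n : ℕ) : (hermP n).coeff n = 2 ^ n := by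
  induction n with
  | zero => simp [hermP_zero]
  | succ m ih =>
    rw [hermP_succ, coeff_sub]
    have h1 : (derivative (hermP m)).coeff (m + 1) = 0 := by
      apply coeff_eq_zero_of_natDegree_lt
      have := natDegree_derivative_le (hermP m)
      have := hermP_natDegree_le m
      omega
    have h2 : (2 * X * hermP m : Polynomial ℝ).coeff (m + 1) = 2 * (hermP m).coeff m := by
      rw [mul_assoc, show ((2 : Polynomial ℝ)) = C 2 from (map_ofNat C 2).symm, coeff_C_mul, coeff_X_mul]
    rw [h1, h2, ih]
    ring

lemma gauss_iteratedDeriv (n : ℕ) (x : ℝ) :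
    iteratedDeriv n (fun y => Real.exp (-(y ^ 2))) x
      = (-1 : ℝ) ^ n * (hermP n).eval x * Real.exp (-(x ^ 2)) := by
  induction n generalizing x with
  | zero => simp [hermP_zero]
  | succ m ih =>
    rw [iteratedDeriv_succ]
    have hfun : iteratedDeriv m (fun y => Real.exp (-(y ^ 2)))
        = fun y => (-1 : ℝ) ^ m * (hermP m).eval y * Real.exp (-(y ^ 2)) := funext fun y => ih y
    rw [hfun]
    have h1 : HasDerivAt (fun y : ℝ => (hermP m).eval y) ((derivative (hermP m)).eval x) x :=
      (hermP m).hasDerivAt x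
    have h2 : HasDerivAt (fun y : ℝ => Real.exp (-(y ^ 2))) (Real.exp (-(x ^ 2)) * (-(2 * x))) x := by
      have hp : HasDerivAt (fun y : ℝ => -(y ^ 2)) (-(2 * x)) x := by
        simpa using (hasDerivAt_pow 2 x).fun_neg
      simpa using hp.exp
    have h3 : HasDerivAt (fun y : ℝ => (-1 : ℝ) ^ m * (hermP m).eval y * Real.exp (-(y ^ 2)))
        ((-1 : ℝ) ^ m * (derivative (hermP m)).eval x * Real.exp (-(x ^ 2))
          + ((-1 : ℝ) ^ m * (hermP m).eval x) * (Real.exp (-(x ^ 2)) * (-(2 * x)))) x := by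
      simpa [mul_comm, mul_assoc, mul_left_comm] using ((h1.const_mul ((-1 : ℝ) ^ m)).fun_mul h2)
    rw [h3.deriv]
    rw [hermP_succ]
    simp only [eval_sub, eval_mul, eval_ofNat, eval_X]
    ring

lemma derivative_prod_X_sub {ι : Type*} [DecidableEq ι] (v : ι → ℝ) (s : Finset ι) :
    derivative (∏ i ∈ s, (X - C (v i))) = ∑ i ∈ s, ∏ j ∈ s.erase i, (X - C (v j)) := by
  induction s using Finset.induction_on with
  | empty => simp
  | @insert a s ha ih =>
    rw [Finset.prod_insert ha, derivative_mul, ih, Finset.sum_insert ha, Finset.erase_insert ha]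
    simp only [derivative_sub, derivative_X, derivative_C, sub_zero, one_mul]
    congr 1
    rw [Finset.mul_sum]
    refine Finset.sum_congr rfl fun i hi => ?_
    rw [Finset.erase_insert_of_ne (show a ≠ i from fun h => ha (h ▸ hi)),
      Finset.prod_insert (fun h => ha (Finset.mem_of_mem_erase h))]

lemma physHermite_eq_eval (N : ℕ) (x : ℝ) : physHermite N x = (hermP N).eval x := by
  unfold physHermite
  rw [gauss_iteratedDeriv]
  have h1 : ((-1 : ℝ) ^ N) * ((-1 : ℝ) ^ N) = 1 := by
    rw [← pow_add]; exact Even.neg_one_pow ⟨N, rfl⟩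
  have h2 : Real.exp (x ^ 2) * Real.exp (-(x ^ 2)) = 1 := by
    rw [← Real.exp_add]; simp
  calc (-1 : ℝ) ^ N * Real.exp (x ^ 2) * ((-1 : ℝ) ^ N * (hermP N).eval x * Real.exp (-(x ^ 2)))
      = ((-1 : ℝ) ^ N * (-1 : ℝ) ^ N) * (Real.exp (x ^ 2) * Real.exp (-(x ^ 2)))
        * (hermP N).eval x := by ring
    _ = (hermP N).eval x := by rw [h1, h2]; ring

/-- increasingly ordered reals satisfying `z_i = ∑_{j≠i} 1/(z_i − z_j)` are
exactly the zeros of the `N`-th physicists' Hermite polynomial; equivalently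
`∏ (x − z_n) = 2^{−N} H_N(x)`. -/
theorem system_solutions_are_hermite_zeros (N : ℕ) (hN : 2 ≤ N) (z : Fin N → ℝ)
    (hmono : StrictMono z)
    (hsys : ∀ i, z i = ∑ j ∈ Finset.univ.erase i, 1 / (z i - z j)) :
    (∀ i, physHermite N (z i) = 0) ∧ (∀ x : ℝ, physHermite N x = 0 → ∃ i, x = z i) ∧
      ∀ x : ℝ, ∏ n, (x - z n) = physHermite N x / 2 ^ N := by
  have hinj : Function.Injective z := hmono.injective
  set p : Polynomial ℝ := ∏ i, (X - C (z i)) with hp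
  have hpeval : ∀ x : ℝ, p.eval x = ∏ n, (x - z n) := by
    intro x; rw [hp, eval_prod]; simp
  -- the auxiliary products
  set g : Fin N → Polynomial ℝ := fun i => ∏ j ∈ Finset.univ.erase i, (X - C (z j)) with hg
  have hp_fact : ∀ i, p = (X - C (z i)) * g i := fun i =>
    (Finset.mul_prod_erase univ _ (Finset.mem_univ i)).symm
  -- the key electrostatic identity
  have hkey : ∀ i, (derivative (g i)).eval (z i) = z i * (g i).eval (z i) := by
    intro i
    rw [hg]
    rw [derivative_prod_X_sub]
    rw [eval_finset_sum]
    have hrhs : z i * (∏ j ∈ Finset.univ.erase i, (X - C (z j))).eval (z i)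
        = ∑ j ∈ Finset.univ.erase i,
            (1 / (z i - z j)) * ∏ k ∈ Finset.univ.erase i, (z i - z k) := by
      rw [eval_prod]
      simp only [eval_sub, eval_X, eval_C]
      rw [← Finset.sum_mul, ← hsys i]
    rw [hrhs]
    refine Finset.sum_congr rfl fun j hj => ?_
    have hji : j ≠ i := Finset.ne_of_mem_erase hj
    have hne : z i - z j ≠ 0 := sub_ne_zero_of_ne (hinj.ne (Ne.symm hji))
    rw [eval_prod]
    simp only [eval_sub, eval_X, eval_C]
    rw [← Finset.mul_prod_erase _ _ hj, ← mul_assoc, one_div, inv_mul_cancel₀ hne, one_mul]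
  -- the ODE polynomial for p
  have hQeval : ∀ i, (derivative (derivative p) - 2 * X * derivative p
      + C (2 * (N : ℝ)) * p).eval (z i) = 0 := by
    intro i
    have hd1 : derivative p = g i + (X - C (z i)) * derivative (g i) := by
      rw [hp_fact i, derivative_mul]; simp
    have hd2 : derivative (derivative p)
        = derivative (g i) + (derivative (g i) + (X - C (z i)) * derivative (derivative (g i))) := by
      rw [hd1, derivative_add, derivative_mul]; simp
    rw [hd2, hd1, hp_fact i]
    simp only [eval_add, eval_sub, eval_mul, eval_X, eval_C, sub_self, zero_mul, mul_zero,
      add_zero, eval_ofNat]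
    rw [hkey i]
    ring
  -- degree facts about p
  have hpmonic : p.Monic := monic_prod_of_monic _ _ fun i _ => monic_X_sub_C (z i)
  have hpdeg : p.natDegree = N := by
    rw [hp, natDegree_prod _ _ fun i _ => X_sub_C_ne_zero (z i)]
    simp
  have hpcoeffN : p.coeff N = 1 := by
    have := hpmonic.coeff_natDegree
    rwa [hpdeg] at this
  -- Q has all coefficients ≥ N zero
  have hQcoeff : ∀ m, N ≤ m → (derivative (derivative p) - 2 * X * derivative p
      + C (2 * (N : ℝ)) * p).coeff m = 0 := by
    intro m hm
    obtain ⟨k, rfl⟩ : ∃ k, m = k + 1 := ⟨m - 1, by omega⟩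
    have h2X : (2 * X * derivative p).coeff (k + 1)
        = 2 * (p.coeff (k + 1) * (k + 1)) := by
      rw [mul_assoc, show ((2 : Polynomial ℝ)) = C 2 from (map_ofNat C 2).symm, coeff_C_mul,
        coeff_X_mul, coeff_derivative]
    have hdd : (derivative (derivative p)).coeff (k + 1) = 0 := by
      rw [coeff_derivative, coeff_derivative]
      have : p.coeff (k + 3) = 0 :=
        coeff_eq_zero_of_natDegree_lt (by omega)
      rw [this]; ring
    rw [coeff_add, coeff_sub, hdd, h2X, coeff_C_mul]
    rcases eq_or_lt_of_le hm with he | hl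
    · have hk : ((N : ℝ)) = (k : ℝ) + 1 := by exact_mod_cast he
      rw [← he, hpcoeffN, hk]
      ring
    · rw [coeff_eq_zero_of_natDegree_lt (by omega)]
      ring
  -- hence Q = 0
  have hQ0 : derivative (derivative p) - 2 * X * derivative p + C (2 * (N : ℝ)) * p = 0 := by
    set Q := derivative (derivative p) - 2 * X * derivative p + C (2 * (N : ℝ)) * p with hQ
    by_cases hz : Q = 0
    · exact hz
    refine Polynomial.eq_zero_of_natDegree_lt_card_of_eval_eq_zero Q hinj hQeval ?_
    rw [Fintype.card_fin]
    rw [natDegree_lt_iff_degree_lt hz]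
    exact (degree_lt_iff_coeff_zero Q N).mpr fun m hm => hQcoeff m (by exact_mod_cast hm)
  -- R := 2^N p - hermP N satisfies the same ODE
  have hRode : derivative (derivative (C ((2:ℝ)^N) * p - hermP N))
      - 2 * X * derivative (C ((2:ℝ)^N) * p - hermP N)
      + C (2 * (N : ℝ)) * (C ((2:ℝ)^N) * p - hermP N) = 0 := by
    have h2 := hermP_ode N
    simp only [derivative_sub, derivative_C_mul]
    linear_combination (C ((2:ℝ)^N)) * hQ0 - h2
  have hRcoeff : ∀ m, N ≤ m → (C ((2:ℝ)^N) * p - hermP N).coeff m = 0 := by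
    intro m hm
    rw [coeff_sub, coeff_C_mul]
    rcases eq_or_lt_of_le hm with he | hl
    · rw [← he, hpcoeffN, hermP_coeff]
      ring
    · rw [coeff_eq_zero_of_natDegree_lt (by omega),
        coeff_eq_zero_of_natDegree_lt (lt_of_le_of_lt (hermP_natDegree_le N) hl)]
      ring
  have hR0 : C ((2:ℝ)^N) * p - hermP N = 0 := by
    set R := C ((2:ℝ)^N) * p - hermP N with hR
    by_contra hRne
    have hdlt : R.natDegree < N := by
      rw [natDegree_lt_iff_degree_lt hRne]
      exact (degree_lt_iff_coeff_zero R N).mpr fun m hm => hRcoeff m (by exact_mod_cast hm)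
    have hc : R.coeff R.natDegree ≠ 0 := by
      rw [coeff_natDegree]
      exact leadingCoeff_ne_zero.mpr hRne
    have hco := congrArg (fun q : Polynomial ℝ => q.coeff R.natDegree) hRode
    simp only [coeff_add, coeff_sub, coeff_C_mul, coeff_zero] at hco
    have hdd : (derivative (derivative R)).coeff R.natDegree = 0 := by
      rw [coeff_derivative, coeff_derivative,
        coeff_eq_zero_of_natDegree_lt (by omega)]
      ring
    rw [hdd] at hco
    rcases Nat.eq_zero_or_eq_succ_pred R.natDegree with h0 | hsucc
    · rw [h0] at hco hc
      rw [mul_assoc, show ((2 : Polynomial ℝ)) = C 2 from (map_ofNat C 2).symm, coeff_C_mul,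
        mul_coeff_zero, coeff_X_zero, zero_mul, mul_zero] at hco
      have hNne : (2 * (N:ℝ)) ≠ 0 := by positivity
      have : R.coeff 0 = 0 := by
        have hN0 : (0:ℝ) < (N:ℝ) := by
          have : 0 < N := by omega
          exact_mod_cast this
        rcases mul_eq_zero.mp (show (2*(N:ℝ)) * R.coeff 0 = 0 by linarith [hco]) with h | h
        · linarith
        · exact h
      exact hc this
    · set d := R.natDegree with hdd2
      obtain ⟨e, he⟩ : ∃ e, d = e + 1 := ⟨d - 1, hsucc⟩
      rw [he] at hco hc
      rw [mul_assoc, show ((2 : Polynomial ℝ)) = C 2 from (map_ofNat C 2).symm, coeff_C_mul,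
        coeff_X_mul, coeff_derivative] at hco
      -- hco : 0 - 2 * (R.coeff (e+1) * (e+1)) + 2 * N * R.coeff (e+1) = 0
      have hlt : (e : ℝ) + 1 < (N : ℝ) := by
        have : e + 1 < N := he ▸ hdlt
        exact_mod_cast this
      apply hc
      by_contra hcc
      have h2 : (2 * (N : ℝ) - 2 * ((e : ℝ) + 1)) ≠ 0 := by nlinarith
      apply h2
      have : R.coeff (e + 1) * (2 * (N : ℝ) - 2 * ((e : ℝ) + 1)) = 0 := by linarith [hco]
      rcases mul_eq_zero.mp this with h | h
      · exact absurd h hcc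
      · exact h
  -- conclusions
  have hPN : ∀ x : ℝ, (hermP N).eval x = 2 ^ N * ∏ n, (x - z n) := by
    intro x
    have hE : hermP N = C ((2:ℝ)^N) * p := (sub_eq_zero.mp hR0).symm
    rw [hE, eval_mul, eval_C, hpeval]
  have h2pow : ((2:ℝ)^N) ≠ 0 := by positivity
  refine ⟨?_, ?_, ?_⟩
  · intro i
    rw [physHermite_eq_eval, hPN]
    have hz0 : ∏ n, (z i - z n) = 0 :=
      Finset.prod_eq_zero (Finset.mem_univ i) (by simp)
    rw [hz0]; ring
  · intro x hx
    rw [physHermite_eq_eval, hPN] at hx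
    have hzero : ∏ n, (x - z n) = 0 := by
      rcases mul_eq_zero.mp hx with h | h
      · exact absurd h h2pow
      · exact h
    obtain ⟨i, _, hi⟩ := Finset.prod_eq_zero_iff.mp hzero
    exact ⟨i, by linarith [sub_eq_zero.mp hi]⟩
  · intro x
    rw [physHermite_eq_eval, hPN]
    field_simp
end

section
/- Let N ≥ 2 and let h_{N,1} < … < h_{N,N} be the N zeros of the N-th physicists' Hermite polynomial H_N. Then ∏_{i=1}^N H_{N−1}(h_{N,i}) = (−2)^{N(N−1)/2} ∏_{j=1}^{N−1} j^j. -/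
open Finset

open Polynomial

noncomputable def PH : ℕ → Polynomial ℝ
  | 0 => 1
  | (n+1) => C 2 * X * PH n - derivative (PH n)

lemma PH_zero : PH 0 = 1 := rfl
lemma PH_succ (n : ℕ) : PH (n+1) = C 2 * X * PH n - derivative (PH n) := rfl

lemma PH_natDegree_coeff (n : ℕ) : (PH n).natDegree ≤ n ∧ (PH n).coeff n = 2 ^ n := by
  induction n with
  | zero => simp [PH_zero]
  | succ n ih =>
    obtain ⟨hd, hc⟩ := ih
    have hCX : (C (2:ℝ) * X).natDegree ≤ 1 := by
      simpa using natDegree_C_mul_le (2:ℝ) X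
    constructor
    · refine le_trans (natDegree_sub_le _ _) (max_le ?_ ?_)
      · exact le_trans natDegree_mul_le (by omega)
      · exact le_trans (natDegree_derivative_le _) (by omega)
    · rw [PH_succ, coeff_sub, mul_assoc, coeff_C_mul, coeff_X_mul,
        coeff_eq_zero_of_natDegree_lt (lt_of_le_of_lt (natDegree_derivative_le _) (by omega)),
        hc]
      ring

lemma PH_natDegree (n : ℕ) : (PH n).natDegree = n := by
  refine le_antisymm (PH_natDegree_coeff n).1 (le_natDegree_of_ne_zero ?_)
  rw [(PH_natDegree_coeff n).2]; positivity

lemma PH_leadingCoeff (n : ℕ) : (PH n).leadingCoeff = 2 ^ n := by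
  rw [leadingCoeff, PH_natDegree, (PH_natDegree_coeff n).2]

lemma PH_ne_zero (n : ℕ) : PH n ≠ 0 := by
  intro hn
  have h2 := (PH_natDegree_coeff n).2
  rw [hn] at h2
  simp at h2
  exact pow_ne_zero n two_ne_zero h2.symm

lemma PH_deriv_eq (n : ℕ) : derivative (PH n) = C 2 * X * PH n - PH (n+1) := by
  rw [PH_succ]; ring

lemma PH_derivative (n : ℕ) : derivative (PH (n+1)) = C (2*(n+1) : ℝ) * PH n := by
  induction n with
  | zero =>
    simp [PH_succ, PH_zero]
  | succ n ih =>
    rw [PH_succ (n+1), ih]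
    simp only [derivative_sub, derivative_mul, derivative_C, derivative_X, ih, PH_deriv_eq n]
    push_cast
    ring_nf
    rw [show C ((4:ℝ) + (n:ℝ)*2) = C 2 + C (2 + (n:ℝ)*2) by rw [← C_add]; ring_nf]
    ring

lemma PH_rec (n : ℕ) : PH (n+2) = C 2 * X * PH (n+1) - C (2*(n+1) : ℝ) * PH n := by
  rw [PH_succ (n+1), PH_derivative]


lemma iter_gauss (n : ℕ) (x : ℝ) :
    iteratedDeriv n (fun y => Real.exp (-(y ^ 2))) x
      = (-1 : ℝ) ^ n * (PH n).eval x * Real.exp (-(x ^ 2)) := by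
  induction n generalizing x with
  | zero => simp [PH_zero]
  | succ n ih =>
    rw [iteratedDeriv_succ]
    have hfun : iteratedDeriv n (fun y => Real.exp (-(y ^ 2)))
        = fun y => (-1:ℝ) ^ n * (PH n).eval y * Real.exp (-(y ^ 2)) := funext ih
    rw [hfun]
    have hp : HasDerivAt (fun y : ℝ => (PH n).eval y) ((derivative (PH n)).eval x) x :=
      (PH n).hasDerivAt x
    have hq : HasDerivAt (fun y : ℝ => -(y^2)) (-(2*x)) x := by
      simpa [Pi.neg_def] using (hasDerivAt_pow 2 x).neg
    have he : HasDerivAt (fun y : ℝ => Real.exp (-(y^2)))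
        (Real.exp (-(x^2)) * (-(2*x))) x := hq.exp
    have h1 : HasDerivAt (fun y : ℝ => (-1:ℝ)^n * (PH n).eval y * Real.exp (-(y ^ 2)))
        ((-1:ℝ)^n * ((derivative (PH n)).eval x * Real.exp (-(x^2))
          + (PH n).eval x * (Real.exp (-(x^2)) * (-(2*x))))) x := by
      simpa [mul_assoc] using (hp.mul he).const_mul ((-1:ℝ)^n)
    rw [h1.deriv, PH_succ]
    simp only [eval_sub, eval_mul, eval_C, eval_X]
    ring

lemma physHermite_eq (n : ℕ) (x : ℝ) : physHermite n x = (PH n).eval x := by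
  unfold physHermite
  rw [iter_gauss]
  have : Real.exp (x^2) * Real.exp (-(x^2)) = 1 := by
    rw [← Real.exp_add]; simp
  have hsq : ((-1:ℝ)^n) * ((-1:ℝ)^n) = 1 := by
    rw [← pow_add]; simp [pow_mul]
  rw [show (-1:ℝ)^n * Real.exp (x^2) * ((-1:ℝ)^n * eval x (PH n) * Real.exp (-(x^2)))
      = ((-1:ℝ)^n * (-1:ℝ)^n) * (Real.exp (x^2) * Real.exp (-(x^2))) * eval x (PH n) from by
    ring, hsq, this]
  ring

lemma PH_factor (n : ℕ) (g : Fin n → ℝ) (hinj : Function.Injective g)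
    (hz : ∀ i, (PH n).eval (g i) = 0) :
    PH n = C ((2:ℝ)^n) * ∏ i, (X - C (g i)) := by
  rcases Nat.eq_zero_or_pos n with hn | hn
  · subst hn
    simp [PH_zero]
  set q : Polynomial ℝ := C ((2:ℝ)^n) * ∏ i, (X - C (g i)) with hq
  have hprodmonic : (∏ i : Fin n, (X - C (g i))).Monic :=
    monic_prod_of_monic _ _ fun i _ => monic_X_sub_C (g i)
  have hproddeg : (∏ i : Fin n, (X - C (g i))).natDegree = n := by
    rw [natDegree_prod _ _ fun i _ => X_sub_C_ne_zero (g i)]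
    simp
  have hqdeg : q.natDegree = n := by
    rw [hq, natDegree_C_mul (by positivity), hproddeg]
  have hqcoeff : q.coeff n = 2^n := by
    have h1 := hprodmonic.coeff_natDegree
    rw [hproddeg] at h1
    rw [hq, coeff_C_mul, h1, mul_one]
  set d : Polynomial ℝ := PH n - q with hd
  rcases eq_or_ne d 0 with h0 | h0
  · have : PH n = q := by rw [hd] at h0; exact sub_eq_zero.mp h0
    exact this
  · exfalso
    have hdev : ∀ i, d.eval (g i) = 0 := by
      intro i
      simp [hd, hq, hz i, eval_prod, Finset.prod_eq_zero (Finset.mem_univ i)]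
    have hddeg : d.natDegree ≤ n :=
      le_trans (natDegree_sub_le _ _) (by simp [PH_natDegree, hqdeg])
    have hdcoeff : d.coeff n = 0 := by
      simp [hd, (PH_natDegree_coeff n).2, hqcoeff]
    have hdlt : d.natDegree < n := by
      rcases lt_or_eq_of_le hddeg with h | h
      · exact h
      · have hlc := leadingCoeff_ne_zero.mpr h0
        rw [leadingCoeff, h] at hlc
        exact absurd hdcoeff hlc
    have := eq_zero_of_natDegree_lt_card_of_eval_eq_zero d hinj hdev
      (by simpa using hdlt)
    exact h0 this

lemma PH_rolle (n : ℕ) (h : Fin (n+2) → ℝ) (hmono : StrictMono h)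
    (hzero : ∀ i, (PH (n+2)).eval (h i) = 0) :
    ∃ g : Fin (n+1) → ℝ, StrictMono g ∧ (∀ j, (PH (n+1)).eval (g j) = 0) := by
  have key : ∀ j : Fin (n+1), ∃ c,
      h j.castSucc < c ∧ c < h j.succ ∧ (PH (n+1)).eval c = 0 := by
    intro j
    have hab : h j.castSucc < h j.succ := hmono (Fin.castSucc_lt_succ : j.castSucc < j.succ)
    obtain ⟨c, hc, hc0⟩ := exists_deriv_eq_zero hab
      ((PH (n+2)).continuous.continuousOn)
      (by rw [hzero, hzero])
    refine ⟨c, hc.1, hc.2, ?_⟩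
    rw [Polynomial.deriv, PH_derivative] at hc0
    simp only [eval_mul, eval_C] at hc0
    rcases mul_eq_zero.mp hc0 with h' | h'
    · exfalso; revert h'; push_cast; positivity
    · exact h'
  choose g hg1 hg2 hg3 using key
  refine ⟨g, ?_, hg3⟩
  intro j k hjk
  calc g j < h j.succ := hg2 j
    _ ≤ h k.castSucc := hmono.monotone (by
        have hjk' : (j : ℕ) < (k : ℕ) := hjk
        rw [Fin.le_def]
        simp only [Fin.val_succ, Fin.coe_castSucc]
        omega)
    _ < g k := hg1 k

lemma key : ∀ M : ℕ, ∀ h : Fin (M+1) → ℝ, StrictMono h →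
    (∀ i, (PH (M+1)).eval (h i) = 0) →
    ∏ i, (PH M).eval (h i)
      = (-2:ℝ) ^ ((M+1)*M/2) * ∏ j ∈ Finset.Icc 1 M, (j : ℝ) ^ j := by
  intro M
  induction M with
  | zero =>
    intro h _ _
    simp [PH_zero]
  | succ M ih =>
    intro h hmono hzero
    obtain ⟨g, gmono, gzero⟩ := PH_rolle M h hmono hzero
    have hA : PH (M+1) = C ((2:ℝ)^(M+1)) * ∏ j, (X - C (g j)) :=
      PH_factor (M+1) g gmono.injective gzero
    have hB : PH (M+2) = C ((2:ℝ)^(M+2)) * ∏ i, (X - C (h i)) :=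
      PH_factor (M+2) h hmono.injective hzero
    -- LHS in terms of double product
    have hLHS : ∏ i, (PH (M+1)).eval (h i)
        = ((2:ℝ)^(M+1))^(M+2) * ∏ i, ∏ j, (h i - g j) := by
      rw [hA]
      simp only [eval_mul, eval_C, eval_prod, eval_sub, eval_X]
      rw [Finset.prod_mul_distrib, Finset.prod_const]
      simp
    -- double product symmetry
    have hswap : ∏ j, ∏ i, (g j - h i) = ∏ i, ∏ j, (h i - g j) := by
      have e1 : ∀ j : Fin (M+1), ∏ i : Fin (M+2), (g j - h i)
          = (-1:ℝ)^(M+2) * ∏ i : Fin (M+2), (h i - g j) := by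
        intro j
        simp_rw [show ∀ i : Fin (M+2), g j - h i = (-1) * (h i - g j) from fun i => by ring]
        rw [Finset.prod_mul_distrib, Finset.prod_const]
        simp
      simp_rw [e1]
      rw [Finset.prod_mul_distrib, Finset.prod_const, ← pow_mul, ← Finset.prod_comm]
      simp only [Finset.card_univ, Fintype.card_fin]
      have : Even ((M+2)*(M+1)) := by
        have h2 := Nat.even_mul_succ_self (M+1)
        rwa [Nat.mul_comm] at h2
      rw [this.neg_one_pow, one_mul]
    -- the cross product T
    have hT : ∏ j, (PH (M+2)).eval (g j)
        = ((2:ℝ)^(M+2))^(M+1) * ∏ i, ∏ j, (h i - g j) := by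
      rw [hB]
      simp only [eval_mul, eval_C, eval_prod, eval_sub, eval_X]
      rw [Finset.prod_mul_distrib, Finset.prod_const, hswap]
      simp
    -- T via the recurrence
    have hT2 : ∏ j, (PH (M+2)).eval (g j)
        = (-(2*((M:ℝ)+1)))^(M+1) * ∏ j, (PH M).eval (g j) := by
      calc ∏ j, (PH (M+2)).eval (g j)
          = ∏ j, (-(2*((M:ℝ)+1)) * (PH M).eval (g j)) := by
            refine Finset.prod_congr rfl fun j _ => ?_
            rw [PH_rec M]
            simp only [eval_sub, eval_mul, eval_C, eval_X, gzero j]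
            push_cast
            ring
        _ = (-(2*((M:ℝ)+1)))^(M+1) * ∏ j, (PH M).eval (g j) := by
            rw [Finset.prod_mul_distrib, Finset.prod_const]
            simp
    -- inductive value
    have hIH := ih g gmono gzero
    -- combine
    have hcoef : ((2:ℝ)^(M+1))^(M+2) = ((2:ℝ)^(M+2))^(M+1) := by
      rw [← pow_mul, ← pow_mul, Nat.mul_comm]
    rw [hLHS, hcoef, ← hT, hT2, hIH]
    have hIcc : ∏ j ∈ Finset.Icc 1 (M+1), (j : ℝ) ^ j
        = (∏ j ∈ Finset.Icc 1 M, (j : ℝ) ^ j) * ((M+1 : ℕ) : ℝ)^(M+1) :=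
      Finset.prod_Icc_succ_top (by omega) _
    rw [hIcc]
    have hexp : (M+1) + (M+1)*M/2 = (M+2)*(M+1)/2 := by
      have h1 : (M+2)*(M+1) = (M+1)*M + 2*(M+1) := by ring
      have h2 : (M+1)*M = M*(M+1) := by ring
      obtain ⟨k, hk⟩ := Nat.even_mul_succ_self M
      omega
    have hneg : (-(2*((M:ℝ)+1)))^(M+1) = (-2:ℝ)^(M+1) * ((M+1:ℕ):ℝ)^(M+1) := by
      push_cast
      rw [show -(2*((M:ℝ)+1)) = (-2) * ((M:ℝ)+1) by ring, mul_pow]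
    rw [hneg, ← hexp, pow_add]
    ring

/-- `∏_{i=1}^N H_{N−1}(h_{N,i}) = (−2)^{N(N−1)/2} ∏_{j=1}^{N−1} j^j`. -/
theorem prod_hermite_pred_at_zeros (N : ℕ) (hN : 2 ≤ N) (h : Fin N → ℝ)
    (hmono : StrictMono h)
    (hzero : ∀ i, physHermite N (h i) = 0)
    (hall : ∀ x : ℝ, physHermite N x = 0 → ∃ i, x = h i) :
    ∏ i, physHermite (N - 1) (h i)
      = (-2 : ℝ) ^ (N * (N - 1) / 2) * ∏ j ∈ Finset.Icc 1 (N - 1), (j : ℝ) ^ j := by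
  obtain ⟨M, rfl⟩ : ∃ M, N = M + 1 := ⟨N - 1, by omega⟩
  simp only [physHermite_eq, Nat.add_sub_cancel] at hzero ⊢
  exact key M h hmono hzero
end

section
/- Let N ≥ 2 and let h_{N,1} < … < h_{N,N} be the N zeros of the N-th physicists' Hermite polynomial H_N. Then the squared discriminant-type product of the zeros satisfies ∏_{1≤i<j≤N} (h_{N,j} − h_{N,i})² = 2^{−N(N−1)/2} ∏_{j=1}^{N} j^j. -/
open Finset Polynomial

noncomputable def pH : ℕ → Polynomial ℝ
  | 0 => 1
  | n+1 => C 2 * X * pH n - derivative (pH n)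

lemma pH_succ (n : ℕ) : pH (n+1) = C 2 * X * pH n - derivative (pH n) := rfl

lemma pH_natDegree_le (n : ℕ) : (pH n).natDegree ≤ n := by
  induction n with
  | zero => simp [pH]
  | succ n ih =>
    rw [pH_succ]
    refine (natDegree_sub_le _ _).trans (max_le ?_ ?_)
    · refine (natDegree_mul_le).trans ?_
      have : (C (2:ℝ) * X).natDegree ≤ 1 := (natDegree_C_mul_le _ _).trans natDegree_X_le
      omega
    · exact (natDegree_derivative_le _).trans (by omega)

lemma pH_coeff (n : ℕ) : (pH n).coeff n = 2 ^ n := by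
  induction n with
  | zero => simp [pH]
  | succ n ih =>
    rw [pH_succ, coeff_sub, mul_assoc, coeff_C_mul, coeff_X_mul, ih,
      coeff_derivative]
    have : (pH n).coeff (n + 1 + 1) = 0 :=
      coeff_eq_zero_of_natDegree_lt (by have := pH_natDegree_le n; omega)
    rw [this]
    ring

lemma pH_ne_zero (n : ℕ) : pH n ≠ 0 := fun h => by
  have h2 := pH_coeff n
  rw [h, coeff_zero] at h2
  exact pow_ne_zero n (two_ne_zero) h2.symm

lemma pH_natDegree (n : ℕ) : (pH n).natDegree = n :=
  le_antisymm (pH_natDegree_le n) (le_natDegree_of_ne_zero (by rw [pH_coeff]; positivity))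

lemma pH_leadingCoeff (n : ℕ) : (pH n).leadingCoeff = 2 ^ n := by
  rw [leadingCoeff, pH_natDegree, pH_coeff]

lemma pH_derivative (n : ℕ) : derivative (pH (n+1)) = C (2 * (n+1) : ℝ) * pH n := by
  induction n with
  | zero =>
    simp [pH_succ, pH]
  | succ n ih =>
    have h1 : derivative (pH (n+1+1)) = C 2 * pH (n+1) + C 2 * X * derivative (pH (n+1))
        - derivative (derivative (pH (n+1))) := by
      rw [pH_succ (n+1), derivative_sub, derivative_mul, derivative_mul, derivative_C,
        derivative_X]
      ring
    rw [h1, ih, derivative_C_mul, pH_succ n]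
    push_cast
    simp only [C_add, C_mul, C_1]
    ring

lemma iter_exp (n : ℕ) : iteratedDeriv n (fun y : ℝ => Real.exp (-(y ^ 2)))
    = fun x => (-1 : ℝ)^n * (pH n).eval x * Real.exp (-(x ^ 2)) := by
  induction n with
  | zero => funext x; simp [pH]
  | succ n ih =>
    rw [iteratedDeriv_succ, ih]
    funext x
    have h2 : HasDerivAt (fun x : ℝ => Real.exp (-(x ^ 2)))
        ((-(2 * x)) * Real.exp (-(x ^ 2))) x := by
      have := ((hasDerivAt_pow 2 x).neg).exp
      simpa [mul_comm] using this
    have h1 : HasDerivAt (fun x : ℝ => (-1:ℝ)^n * (pH n).eval x * Real.exp (-(x ^ 2)))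
        ((-1:ℝ)^n * ((derivative (pH n)).eval x * Real.exp (-(x ^ 2))
          + (pH n).eval x * ((-(2 * x)) * Real.exp (-(x ^ 2))))) x := by
      have := (((pH n).hasDerivAt x).mul h2).const_mul ((-1:ℝ)^n)
      simpa [mul_assoc, mul_add] using this
    rw [h1.deriv]
    rw [pH_succ]
    simp only [eval_sub, eval_mul, eval_C, eval_X, pow_succ]
    ring

lemma physHermite_eval (N : ℕ) (x : ℝ) : physHermite N x = (pH N).eval x := by
  rw [physHermite, iter_exp]
  have : Real.exp (x ^ 2) * Real.exp (-(x ^ 2)) = 1 := by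
    rw [← Real.exp_add]; simp
  have h4 : ((-1:ℝ)^N) * ((-1:ℝ)^N) = 1 := by
    rw [← pow_add, ← two_mul, pow_mul]; norm_num
  calc (-1:ℝ) ^ N * Real.exp (x ^ 2) * ((-1:ℝ)^N * (pH N).eval x * Real.exp (-(x ^ 2)))
      = (((-1:ℝ)^N) * ((-1:ℝ)^N)) * (Real.exp (x ^ 2) * Real.exp (-(x ^ 2))) * (pH N).eval x := by
        ring
    _ = (pH N).eval x := by rw [this, h4]; ring

lemma factor {n : ℕ} (p : Polynomial ℝ) (hd : p.natDegree = n) (hp : p ≠ 0)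
    (r : Fin n → ℝ) (hinj : Function.Injective r) (hr : ∀ i, p.eval (r i) = 0) :
    p = C p.leadingCoeff * ∏ i, (X - C (r i)) := by
  classical
  set m : Multiset ℝ := Multiset.map r Finset.univ.val with hm
  have hnodup : m.Nodup := Multiset.Nodup.map hinj Finset.univ.nodup
  have hcard : Multiset.card m = n := by simp [hm]
  have hle : m ≤ p.roots := by
    rw [Multiset.le_iff_count]
    intro a
    by_cases ha : a ∈ m
    · have h1 : m.count a = 1 := Multiset.count_eq_one_of_mem hnodup ha
      rw [h1, Polynomial.count_roots]
      obtain ⟨i, _, rfl⟩ := Multiset.mem_map.mp ha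
      exact (Polynomial.rootMultiplicity_pos hp).mpr (hr i)
    · rw [Multiset.count_eq_zero_of_notMem ha]
      exact Nat.zero_le _
  have hroots : p.roots = m :=
    (Multiset.eq_of_le_of_card_le hle (by rw [hcard, ← hd]; exact p.card_roots')).symm
  have hsplits : Splits p :=
    splits_iff_card_roots.mpr (by rw [hroots, hcard, hd])
  have heq := hsplits.eq_prod_roots
  rw [hroots] at heq
  have hprod : (Multiset.map (fun a => X - C a) m).prod = ∏ i, (X - C (r i)) := by
    rw [hm, Multiset.map_map, Finset.prod_eq_multiset_prod]
    rfl
  rw [← hprod]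
  exact heq

def IsRoots (k : ℕ) (r : Fin k → ℝ) : Prop :=
  StrictMono r ∧ pH k = C ((2:ℝ)^k) * ∏ i, (X - C (r i))

lemma isRoots_of_zeros {k : ℕ} (r : Fin k → ℝ) (hm : StrictMono r)
    (hz : ∀ i, (pH k).eval (r i) = 0) : IsRoots k r := by
  refine ⟨hm, ?_⟩
  have := factor (pH k) (pH_natDegree k) (pH_ne_zero k) r hm.injective hz
  rwa [pH_leadingCoeff] at this

lemma eval_of_isRoots {k : ℕ} {r : Fin k → ℝ} (h : IsRoots k r) (i : Fin k) :
    (pH k).eval (r i) = 0 := by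
  rw [h.2, eval_mul, eval_prod]
  rw [Finset.prod_eq_zero (Finset.mem_univ i) (by simp)]
  ring

lemma descent {k : ℕ} {r : Fin (k+1) → ℝ} (h : IsRoots (k+1) r) :
    ∃ s : Fin k → ℝ, IsRoots k s := by
  have hz : ∀ i, (pH (k+1)).eval (r i) = 0 := eval_of_isRoots h
  have key : ∀ i : Fin k, ∃ c, c ∈ Set.Ioo (r i.castSucc) (r i.succ) ∧ (pH k).eval c = 0 := by
    intro i
    have hab : r i.castSucc < r i.succ := h.1 (by simp [Fin.lt_def])
    obtain ⟨c, hc, hderiv⟩ := exists_deriv_eq_zero (f := fun x : ℝ => (pH (k+1)).eval x) hab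
      ((pH (k+1)).continuous.continuousOn) (by simp only [hz])
    refine ⟨c, hc, ?_⟩
    rw [Polynomial.deriv, pH_derivative] at hderiv
    simp only [eval_mul, eval_C] at hderiv
    have h2 : (2 * ((k:ℝ)+1)) ≠ 0 := by positivity
    exact (mul_eq_zero.mp hderiv).resolve_left h2
  choose s hs1 hs2 using key
  have hmono : StrictMono s := by
    intro i j hij
    calc s i < r i.succ := (hs1 i).2
      _ ≤ r j.castSucc := h.1.monotone (by
        simp only [Fin.le_def, Fin.lt_def, Fin.coe_castSucc, Fin.val_succ] at *
        omega)
      _ < s j := (hs1 j).1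
  exact ⟨s, isRoots_of_zeros s hmono hs2⟩

lemma prodEval : ∀ (k : ℕ) (r : Fin (k+1) → ℝ), IsRoots (k+1) r →
    ∏ i, (pH k).eval (r i) = ∏ m ∈ Finset.range (k+1), (-(2:ℝ) * m) ^ m := by
  intro k
  induction k with
  | zero => intro r _; simp [pH]
  | succ k ih =>
    intro r hr
    obtain ⟨s, hs⟩ := descent hr
    have e1 : ∏ i, (pH (k+1)).eval (r i)
        = (2:ℝ)^((k+1)*(k+2)) * ∏ i : Fin (k+2), ∏ j : Fin (k+1), (r i - s j) := by
      calc ∏ i, (pH (k+1)).eval (r i)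
          = ∏ i : Fin (k+2), ((2:ℝ)^(k+1) * ∏ j, (r i - s j)) := by
            refine Finset.prod_congr rfl fun i _ => ?_
            rw [hs.2]
            simp [eval_prod]
        _ = _ := by
            rw [Finset.prod_mul_distrib, Finset.prod_const, card_univ, Fintype.card_fin,
              ← pow_mul]
    have esign : ∏ i : Fin (k+2), ∏ j : Fin (k+1), (r i - s j)
        = ∏ j : Fin (k+1), ∏ i : Fin (k+2), (s j - r i) := by
      rw [Finset.prod_comm]
      calc ∏ j : Fin (k+1), ∏ i : Fin (k+2), (r i - s j)
          = ∏ j : Fin (k+1), ((-1:ℝ)^(k+2) * ∏ i : Fin (k+2), (s j - r i)) := by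
            refine Finset.prod_congr rfl fun j _ => ?_
            calc ∏ i : Fin (k+2), (r i - s j) = ∏ i : Fin (k+2), (-1:ℝ) * (s j - r i) := by
                  refine Finset.prod_congr rfl fun i _ => by ring
              _ = (-1:ℝ)^(k+2) * ∏ i : Fin (k+2), (s j - r i) := by
                  rw [Finset.prod_mul_distrib, Finset.prod_const, card_univ, Fintype.card_fin]
        _ = ((-1:ℝ)^(k+2))^(k+1) * ∏ j : Fin (k+1), ∏ i : Fin (k+2), (s j - r i) := by
            rw [Finset.prod_mul_distrib, Finset.prod_const, card_univ, Fintype.card_fin]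
        _ = ∏ j : Fin (k+1), ∏ i : Fin (k+2), (s j - r i) := by
            have hev : Even ((k+2)*(k+1)) := by
              have := Nat.even_mul_succ_self (k+1)
              rwa [Nat.mul_comm] at this
            rw [← pow_mul, hev.neg_one_pow, one_mul]
    have e2 : ∏ j, (pH (k+2)).eval (s j)
        = (2:ℝ)^((k+2)*(k+1)) * ∏ j : Fin (k+1), ∏ i : Fin (k+2), (s j - r i) := by
      calc ∏ j, (pH (k+2)).eval (s j)
          = ∏ j : Fin (k+1), ((2:ℝ)^(k+2) * ∏ i, (s j - r i)) := by
            refine Finset.prod_congr rfl fun j _ => ?_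
            rw [hr.2]
            simp [eval_prod]
        _ = _ := by
            rw [Finset.prod_mul_distrib, Finset.prod_const, card_univ, Fintype.card_fin,
              ← pow_mul]
    have e3 : ∀ j, (pH (k+2)).eval (s j) = (-(2:ℝ)*(k+1)) * (pH k).eval (s j) := by
      intro j
      have h0 : (pH (k+1)).eval (s j) = 0 := eval_of_isRoots hs j
      rw [pH_succ (k+1), eval_sub, eval_mul, eval_mul, eval_C, eval_X, h0,
        pH_derivative, eval_mul, eval_C]
      push_cast
      ring
    have e4 : ∏ j, (pH (k+2)).eval (s j)
        = (-(2:ℝ)*(k+1))^(k+1) * ∏ j, (pH k).eval (s j) := by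
      rw [Finset.prod_congr rfl fun j _ => e3 j, Finset.prod_mul_distrib, Finset.prod_const,
        card_univ, Fintype.card_fin]
    rw [e1, esign, Nat.mul_comm (k+1) (k+2), ← e2, e4, ih s hs]
    conv_rhs => rw [Finset.prod_range_succ]
    push_cast
    ring

lemma eval_deriv {n : ℕ} (r : Fin n → ℝ) (i : Fin n) :
    (derivative (∏ j, (X - C (r j)))).eval (r i) = ∏ j ∈ Finset.univ.erase i, (r i - r j) := by
  classical
  have h1 : (∏ j, (X - C (r j))) = (Multiset.map (fun j => X - C (r j)) Finset.univ.val).prod :=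
    rfl
  have h2 : ∀ j : Fin n,
      (Multiset.map (fun k => X - C (r k)) (Finset.univ.val.erase j)).prod
        = ∏ k ∈ Finset.univ.erase j, (X - C (r k)) := by
    intro j
    rw [← Finset.erase_val]
    rfl
  rw [h1, derivative_prod]
  have h3 : (Multiset.map (fun j =>
        (Multiset.map (fun k => X - C (r k)) (Finset.univ.val.erase j)).prod
          * derivative (X - C (r j))) Finset.univ.val).sum
      = ∑ j : Fin n, (∏ k ∈ Finset.univ.erase j, (X - C (r k))) * derivative (X - C (r j)) := by
    simp only [h2]
    rfl
  rw [h3]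
  simp only [derivative_sub, derivative_X, derivative_C, sub_zero, mul_one]
  rw [eval_finset_sum]
  rw [Finset.sum_eq_single i]
  · rw [eval_prod]
    simp
  · intro j _ hj
    rw [eval_prod]
    refine Finset.prod_eq_zero (Finset.mem_erase.mpr ⟨hj.symm, Finset.mem_univ i⟩) (by simp)
  · intro hi
    exact absurd (Finset.mem_univ i) hi

lemma sign_prod {n : ℕ} (h : Fin n → ℝ) :
    ∏ i, ∏ j ∈ Finset.univ.erase i, (h i - h j)
      = (-1:ℝ)^(∑ i : Fin n, (Finset.Ioi i).card)
        * ∏ i, ∏ j ∈ Finset.Ioi i, (h j - h i)^2 := by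
  classical
  have herase : ∀ i : Fin n, Finset.univ.erase i = Finset.Iio i ∪ Finset.Ioi i := by
    intro i
    ext j
    simp only [Finset.mem_erase, Finset.mem_univ, and_true, Finset.mem_union, Finset.mem_Iio,
      Finset.mem_Ioi]
    exact ⟨fun hne => hne.lt_or_gt, fun hlt => hlt.elim ne_of_lt ne_of_gt⟩
  have hdisj : ∀ i : Fin n, Disjoint (Finset.Iio i) (Finset.Ioi i) := by
    intro i
    rw [Finset.disjoint_left]
    intro a ha ha'
    exact absurd (Finset.mem_Ioi.mp ha') (not_lt.mpr (le_of_lt (Finset.mem_Iio.mp ha)))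
  calc ∏ i, ∏ j ∈ Finset.univ.erase i, (h i - h j)
      = ∏ i, ((∏ j ∈ Finset.Iio i, (h i - h j)) * ∏ j ∈ Finset.Ioi i, (h i - h j)) := by
        refine Finset.prod_congr rfl fun i _ => ?_
        rw [herase i, Finset.prod_union (hdisj i)]
    _ = (∏ i, ∏ j ∈ Finset.Iio i, (h i - h j)) * ∏ i, ∏ j ∈ Finset.Ioi i, (h i - h j) :=
        Finset.prod_mul_distrib
    _ = (∏ j, ∏ i ∈ Finset.Ioi j, (h i - h j)) * ∏ i, ∏ j ∈ Finset.Ioi i, (h i - h j) := by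
        rw [Finset.prod_comm' (s := Finset.univ) (t := fun x => Finset.Iio x)
          (t' := Finset.univ) (s' := fun y => Finset.Ioi y) (fun x y => by
          simp only [Finset.mem_univ, Finset.mem_Iio, Finset.mem_Ioi, true_and, and_true])]
    _ = (∏ i, ∏ j ∈ Finset.Ioi i, (h j - h i))
        * ((-1:ℝ)^(∑ i : Fin n, (Finset.Ioi i).card) * ∏ i, ∏ j ∈ Finset.Ioi i, (h j - h i)) := by
        congr 1
        calc ∏ i, ∏ j ∈ Finset.Ioi i, (h i - h j)
            = ∏ i, ((-1:ℝ)^((Finset.Ioi i).card) * ∏ j ∈ Finset.Ioi i, (h j - h i)) := by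
              refine Finset.prod_congr rfl fun i _ => ?_
              calc ∏ j ∈ Finset.Ioi i, (h i - h j)
                  = ∏ j ∈ Finset.Ioi i, (-1:ℝ) * (h j - h i) :=
                    Finset.prod_congr rfl fun j _ => by ring
                _ = _ := by rw [Finset.prod_mul_distrib, Finset.prod_const]
          _ = _ := by
              rw [Finset.prod_mul_distrib, Finset.prod_pow_eq_pow_sum]
    _ = (-1:ℝ)^(∑ i : Fin n, (Finset.Ioi i).card)
        * ∏ i, ∏ j ∈ Finset.Ioi i, (h j - h i)^2 := by
        have hsq : ∏ i, ∏ j ∈ Finset.Ioi i, (h j - h i)^2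
            = (∏ i, ∏ j ∈ Finset.Ioi i, (h j - h i))
              * (∏ i, ∏ j ∈ Finset.Ioi i, (h j - h i)) := by
          rw [← Finset.prod_mul_distrib]
          refine Finset.prod_congr rfl fun i _ => ?_
          rw [← Finset.prod_mul_distrib]
          exact Finset.prod_congr rfl fun j _ => sq (h j - h i)
        rw [hsq]
        ring

lemma sum_card_Ioi (n : ℕ) : ∑ i : Fin n, (Finset.Ioi i).card = n * (n - 1) / 2 := by
  have h1 : ∀ i : Fin n, (Finset.Ioi i).card = n - 1 - (i : ℕ) := fun i => Fin.card_Ioi i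
  simp only [h1]
  rw [Fin.sum_univ_eq_sum_range (fun i => n - 1 - i) n]
  rw [Finset.sum_range_reflect (fun i => i) n]
  exact Finset.sum_range_id n


lemma icc_prod (n : ℕ) : ∏ j ∈ Finset.Icc 1 n, (j:ℝ)^j = ∏ m ∈ Finset.range (n+1), (m:ℝ)^m := by
  induction n with
  | zero => simp
  | succ n ih =>
    rw [Finset.prod_Icc_succ_top (by omega), ih]
    conv_rhs => rw [Finset.prod_range_succ]

/-- `∏_{i<j} (h_{N,j} − h_{N,i})² = 2^{−N(N−1)/2} ∏_{j=1}^N j^j`. -/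
theorem discriminant_hermite_zeros (N : ℕ) (hN : 2 ≤ N) (h : Fin N → ℝ)
    (hmono : StrictMono h)
    (hzero : ∀ i, physHermite N (h i) = 0)
    (hall : ∀ x : ℝ, physHermite N x = 0 → ∃ i, x = h i) :
    ∏ i, ∏ j ∈ Finset.Ioi i, (h j - h i) ^ 2
      = (∏ j ∈ Finset.Icc 1 N, (j : ℝ) ^ j) / 2 ^ (N * (N - 1) / 2) := by
  obtain ⟨M, rfl⟩ : ∃ M, N = M + 1 := ⟨N - 1, by omega⟩
  have hroots : IsRoots (M+1) h :=
    isRoots_of_zeros h hmono (fun i => by rw [← physHermite_eval]; exact hzero i)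
  set D := ∏ i, ∏ j ∈ Finset.Ioi i, (h j - h i)^2 with hD
  set T := ∑ i : Fin (M+1), (Finset.Ioi i).card with hT
  set P := ∏ m ∈ Finset.range (M+1), (m:ℝ)^m with hP
  have way1 : ∏ i, (derivative (pH (M+1))).eval (h i)
      = (2:ℝ)^((M+1)*(M+1)) * ((-1:ℝ)^T * D) := by
    calc ∏ i, (derivative (pH (M+1))).eval (h i)
        = ∏ i, ((2:ℝ)^(M+1) * ∏ j ∈ Finset.univ.erase i, (h i - h j)) := by
          refine Finset.prod_congr rfl fun i _ => ?_
          conv_lhs => rw [hroots.2]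
          rw [derivative_C_mul, eval_mul, eval_C, eval_deriv h i]
      _ = (2:ℝ)^((M+1)*(M+1)) * ∏ i, ∏ j ∈ Finset.univ.erase i, (h i - h j) := by
          rw [Finset.prod_mul_distrib, Finset.prod_const, card_univ, Fintype.card_fin, ← pow_mul]
      _ = _ := by rw [sign_prod h]
  have way2 : ∏ i, (derivative (pH (M+1))).eval (h i)
      = (2*((M:ℝ)+1))^(M+1) * ((-1:ℝ)^T * ((2:ℝ)^T * P)) := by
    have hsum : ∑ m ∈ Finset.range (M+1), m = T := by
      rw [hT, sum_card_Ioi, Finset.sum_range_id]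
    calc ∏ i, (derivative (pH (M+1))).eval (h i)
        = ∏ i, ((2*((M:ℝ)+1)) * (pH M).eval (h i)) := by
          refine Finset.prod_congr rfl fun i _ => ?_
          rw [pH_derivative, eval_mul, eval_C]
      _ = (2*((M:ℝ)+1))^(M+1) * ∏ i, (pH M).eval (h i) := by
          rw [Finset.prod_mul_distrib, Finset.prod_const, card_univ, Fintype.card_fin]
      _ = (2*((M:ℝ)+1))^(M+1) * ∏ m ∈ Finset.range (M+1), (-(2:ℝ)*m)^m := by
          rw [prodEval M h hroots]
      _ = _ := by
          congr 1
          calc ∏ m ∈ Finset.range (M+1), (-(2:ℝ)*m)^m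
              = ∏ m ∈ Finset.range (M+1), ((-1:ℝ)^m * ((2:ℝ)^m * (m:ℝ)^m)) := by
                refine Finset.prod_congr rfl fun m _ => ?_
                rw [show (-(2:ℝ)*m) = (-1) * (2 * m) from by ring, mul_pow, mul_pow]
            _ = ((-1:ℝ)^(∑ m ∈ Finset.range (M+1), m))
                * ((2:ℝ)^(∑ m ∈ Finset.range (M+1), m) * P) := by
                rw [Finset.prod_mul_distrib, Finset.prod_mul_distrib,
                  Finset.prod_pow_eq_pow_sum, Finset.prod_pow_eq_pow_sum, hP]
            _ = _ := by rw [hsum]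
  have hcancel : (2:ℝ)^((M+1)*(M+1)) * D = (2*((M:ℝ)+1))^(M+1) * ((2:ℝ)^T * P) := by
    have hne : ((-1:ℝ)^T) ≠ 0 := pow_ne_zero _ (by norm_num)
    have heq := way1.symm.trans way2
    have h' : (-1:ℝ)^T * ((2:ℝ)^((M+1)*(M+1)) * D)
        = (-1:ℝ)^T * ((2*((M:ℝ)+1))^(M+1) * ((2:ℝ)^T * P)) := by
      linear_combination heq
    exact mul_left_cancel₀ hne h'
  have hTt : T = (M+1) * M / 2 := by
    rw [hT, sum_card_Ioi, Nat.add_sub_cancel]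
  have h2T : 2 * T = (M+1) * M := by
    rw [hTt]
    refine Nat.mul_div_cancel' ?_
    have hev := Nat.even_mul_succ_self M
    rw [Nat.mul_comm] at hev
    exact even_iff_two_dvd.mp hev
  have hexp : (M+1)*(M+1) = ((M+1) + T) + T := by
    have h3 : (M+1)*(M+1) = (M+1)*M + (M+1) := by ring
    omega
  have hIcc : ∏ j ∈ Finset.Icc 1 (M+1), (j:ℝ)^j = ((M:ℝ)+1)^(M+1) * P := by
    rw [icc_prod (M+1), Finset.prod_range_succ, hP]
    push_cast
    ring
  have h5 : (2:ℝ)^(M+1) * (2:ℝ)^T * ((2:ℝ)^T * D)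
      = (2:ℝ)^(M+1) * (2:ℝ)^T * (((M:ℝ)+1)^(M+1) * P) := by
    calc (2:ℝ)^(M+1) * (2:ℝ)^T * ((2:ℝ)^T * D) = (2:ℝ)^((M+1)*(M+1)) * D := by
          rw [hexp, pow_add, pow_add]; ring
      _ = (2*((M:ℝ)+1))^(M+1) * ((2:ℝ)^T * P) := hcancel
      _ = _ := by rw [mul_pow]; ring
  have h6 : (2:ℝ)^T * D = ((M:ℝ)+1)^(M+1) * P := mul_left_cancel₀ (by positivity) h5
  have hgexp : (M + 1) * (M + 1 - 1) / 2 = T := by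
    rw [hTt, Nat.add_sub_cancel]
  rw [hgexp, hIcc, eq_div_iff (by positivity : ((2:ℝ)^T) ≠ 0)]
  linear_combination h6
end

section
/- Let N ≥ 2 and ν > −1/2. Define F_B(v, ν) = (1/2)∑_{i=1}^N v_i² − ((2ν+1)/2)∑_{i=1}^N log|v_i| − ∑_{1≤i<j≤N} log|v_j² − v_i²| for v ∈ ℝ^N with nonzero coordinates whose squares are pairwise distinct. Then for every such v and every u ∈ ℝ^N, the quadratic form of the Hessian of F_B at v satisfies ∑_{1≤i,j≤N} u_i (∂²F_B/∂v_i∂v_j)(v) u_j = ∑_{i=1}^N u_i²(1 + (2ν+1)/(2v_i²)) + ∑_{1≤i≠j≤N} [(u_i v_i − u_j v_j)² + (u_i v_j − u_j v_i)²]/(v_i² − v_j²)², which is strictly positive whenever u ≠ 0; in particular the Hessian of F_B(·, ν) is positive definite at every such v, so every critical point of F_B(·, ν) is a local minimum. -/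
open Finset

private lemma swap_erase_sum (N : ℕ) (g : Fin N → Fin N → ℝ) :
    ∑ i, ∑ j ∈ Finset.univ.erase i, g i j = ∑ i, ∑ j ∈ Finset.univ.erase i, g j i := by
  have h : ∀ (f : Fin N → Fin N → ℝ), ∑ i, ∑ j ∈ Finset.univ.erase i, f i j
      = (∑ i, ∑ j, f i j) - ∑ i, f i i := by
    intro f
    rw [← Finset.sum_sub_distrib]
    refine Finset.sum_congr rfl fun i _ => ?_
    rw [← Finset.add_sum_erase _ _ (Finset.mem_univ i)]
    ring
  rw [h, h, Finset.sum_comm]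

private lemma hess_quadform_eq (N : ℕ) (ν : ℝ) (v u : Fin N → ℝ) :
    ∑ i, ∑ j, u i * ((Matrix.of fun i j =>
      if i = j then
        1 + (2 * ν + 1) / (2 * (v i) ^ 2)
          + 2 * ∑ l ∈ Finset.univ.erase i, ((v i) ^ 2 + (v l) ^ 2) / ((v i) ^ 2 - (v l) ^ 2) ^ 2
      else -(2 * (2 * v i * v j / ((v i) ^ 2 - (v j) ^ 2) ^ 2)) : Matrix (Fin N) (Fin N) ℝ) i j) * u j
        = ∑ i, (u i) ^ 2 * (1 + (2 * ν + 1) / (2 * (v i) ^ 2))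
          + ∑ i, ∑ j ∈ Finset.univ.erase i,
              ((u i * v i - u j * v j) ^ 2 + (u i * v j - u j * v i) ^ 2)
                / ((v i) ^ 2 - (v j) ^ 2) ^ 2 := by
  have hsplit : ∀ i : Fin N,
      ∑ j, u i * ((Matrix.of fun i j =>
        if i = j then
          1 + (2 * ν + 1) / (2 * (v i) ^ 2)
            + 2 * ∑ l ∈ Finset.univ.erase i, ((v i) ^ 2 + (v l) ^ 2) / ((v i) ^ 2 - (v l) ^ 2) ^ 2
        else -(2 * (2 * v i * v j / ((v i) ^ 2 - (v j) ^ 2) ^ 2)) : Matrix (Fin N) (Fin N) ℝ) i j) * u j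
      = (u i) ^ 2 * (1 + (2 * ν + 1) / (2 * (v i) ^ 2))
        + ∑ j ∈ Finset.univ.erase i,
            (2 * (u i) ^ 2 * ((v i) ^ 2 + (v j) ^ 2) / ((v i) ^ 2 - (v j) ^ 2) ^ 2
              - 4 * u i * u j * (v i * v j) / ((v i) ^ 2 - (v j) ^ 2) ^ 2) := by
    intro i
    rw [← Finset.add_sum_erase _ _ (Finset.mem_univ i)]
    have h1 : ∑ j ∈ Finset.univ.erase i, u i * ((Matrix.of fun i j =>
        if i = j then
          1 + (2 * ν + 1) / (2 * (v i) ^ 2)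
            + 2 * ∑ l ∈ Finset.univ.erase i, ((v i) ^ 2 + (v l) ^ 2) / ((v i) ^ 2 - (v l) ^ 2) ^ 2
        else -(2 * (2 * v i * v j / ((v i) ^ 2 - (v j) ^ 2) ^ 2)) : Matrix (Fin N) (Fin N) ℝ) i j) * u j
        = ∑ j ∈ Finset.univ.erase i, -(4 * u i * u j * (v i * v j) / ((v i) ^ 2 - (v j) ^ 2) ^ 2) := by
      refine Finset.sum_congr rfl fun j hj => ?_
      rw [Matrix.of_apply, if_neg (Ne.symm (Finset.ne_of_mem_erase hj))]
      ring
    rw [h1, Matrix.of_apply, if_pos rfl, Finset.sum_sub_distrib, Finset.sum_neg_distrib]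
    have h2 : ∑ j ∈ Finset.univ.erase i,
        2 * (u i) ^ 2 * ((v i) ^ 2 + (v j) ^ 2) / ((v i) ^ 2 - (v j) ^ 2) ^ 2
        = 2 * (u i) ^ 2 * ∑ j ∈ Finset.univ.erase i,
            ((v i) ^ 2 + (v j) ^ 2) / ((v i) ^ 2 - (v j) ^ 2) ^ 2 := by
      rw [Finset.mul_sum]
      exact Finset.sum_congr rfl fun j _ => by ring
    rw [h2]
    ring
  rw [Finset.sum_congr rfl fun i _ => hsplit i, Finset.sum_add_distrib]
  congr 1
  -- remaining: double sum equality using the swap lemma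
  have key : ∑ i, ∑ j ∈ Finset.univ.erase i,
      (2 * (u i) ^ 2 * ((v i) ^ 2 + (v j) ^ 2) / ((v i) ^ 2 - (v j) ^ 2) ^ 2
        - 4 * u i * u j * (v i * v j) / ((v i) ^ 2 - (v j) ^ 2) ^ 2)
      = ∑ i, ∑ j ∈ Finset.univ.erase i,
        (((u i * v i - u j * v j) ^ 2 + (u i * v j - u j * v i) ^ 2)
            / ((v i) ^ 2 - (v j) ^ 2) ^ 2
          + ((u i) ^ 2 * ((v i) ^ 2 + (v j) ^ 2) / ((v i) ^ 2 - (v j) ^ 2) ^ 2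
            - (u j) ^ 2 * ((v j) ^ 2 + (v i) ^ 2) / ((v j) ^ 2 - (v i) ^ 2) ^ 2)) := by
    refine Finset.sum_congr rfl fun i _ => Finset.sum_congr rfl fun j _ => ?_
    ring
  rw [key]
  have split : ∀ i, ∑ j ∈ Finset.univ.erase i,
      (((u i * v i - u j * v j) ^ 2 + (u i * v j - u j * v i) ^ 2)
          / ((v i) ^ 2 - (v j) ^ 2) ^ 2
        + ((u i) ^ 2 * ((v i) ^ 2 + (v j) ^ 2) / ((v i) ^ 2 - (v j) ^ 2) ^ 2
          - (u j) ^ 2 * ((v j) ^ 2 + (v i) ^ 2) / ((v j) ^ 2 - (v i) ^ 2) ^ 2))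
      = (∑ j ∈ Finset.univ.erase i,
          ((u i * v i - u j * v j) ^ 2 + (u i * v j - u j * v i) ^ 2)
            / ((v i) ^ 2 - (v j) ^ 2) ^ 2)
        + (∑ j ∈ Finset.univ.erase i,
            ((u i) ^ 2 * ((v i) ^ 2 + (v j) ^ 2) / ((v i) ^ 2 - (v j) ^ 2) ^ 2
              - (u j) ^ 2 * ((v j) ^ 2 + (v i) ^ 2) / ((v j) ^ 2 - (v i) ^ 2) ^ 2)) := by
    intro i; rw [Finset.sum_add_distrib]
  rw [Finset.sum_congr rfl fun i _ => split i, Finset.sum_add_distrib]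
  have zero : ∑ i, ∑ j ∈ Finset.univ.erase i,
      ((u i) ^ 2 * ((v i) ^ 2 + (v j) ^ 2) / ((v i) ^ 2 - (v j) ^ 2) ^ 2
        - (u j) ^ 2 * ((v j) ^ 2 + (v i) ^ 2) / ((v j) ^ 2 - (v i) ^ 2) ^ 2) = 0 := by
    have := swap_erase_sum N
      (fun i j => (u i) ^ 2 * ((v i) ^ 2 + (v j) ^ 2) / ((v i) ^ 2 - (v j) ^ 2) ^ 2)
    simp only [Finset.sum_sub_distrib] at *
    rw [this]
    simp
  rw [zero, add_zero]

private lemma hess_quadform_pos (N : ℕ) (ν : ℝ) (hν : -(1 / 2) < ν)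
    (v u : Fin N → ℝ) (hv0 : ∀ i, v i ≠ 0) (hu : u ≠ 0) :
    0 < ∑ i, (u i) ^ 2 * (1 + (2 * ν + 1) / (2 * (v i) ^ 2))
        + ∑ i, ∑ j ∈ Finset.univ.erase i,
            ((u i * v i - u j * v j) ^ 2 + (u i * v j - u j * v i) ^ 2)
              / ((v i) ^ 2 - (v j) ^ 2) ^ 2 := by
  have h1 : 0 < ∑ i, (u i) ^ 2 * (1 + (2 * ν + 1) / (2 * (v i) ^ 2)) := by
    obtain ⟨i, hi⟩ := Function.ne_iff.mp hu
    have hpos : ∀ k : Fin N, 0 < 1 + (2 * ν + 1) / (2 * (v k) ^ 2) := by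
      intro k
      have hvk : 0 < (v k) ^ 2 :=
        lt_of_le_of_ne (sq_nonneg _) (Ne.symm (pow_ne_zero 2 (hv0 k)))
      have : 0 < (2 * ν + 1) / (2 * (v k) ^ 2) := div_pos (by linarith) (by linarith)
      linarith
    simp only [Pi.zero_apply] at hi
    refine Finset.sum_pos' (fun k _ => mul_nonneg (sq_nonneg _) (hpos k).le) ⟨i, Finset.mem_univ i, ?_⟩
    have : (0 : ℝ) < (u i) ^ 2 :=
      lt_of_le_of_ne (sq_nonneg _) (Ne.symm (pow_ne_zero 2 hi))
    exact mul_pos this (hpos i)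
  have h2 : 0 ≤ ∑ i, ∑ j ∈ Finset.univ.erase i,
      ((u i * v i - u j * v j) ^ 2 + (u i * v j - u j * v i) ^ 2)
        / ((v i) ^ 2 - (v j) ^ 2) ^ 2 := by
    refine Finset.sum_nonneg fun i _ => Finset.sum_nonneg fun j _ => ?_
    exact div_nonneg (add_nonneg (sq_nonneg _) (sq_nonneg _)) (sq_nonneg _)
  linarith

/-- positive definiteness of the Hessian of `F_B(·, ν)` at admissible points.
The Hessian entries are
`δ_ij(1 + (2ν+1)/(2v_i²)) + 2[δ_ij ∑_{l≠i} (v_i²+v_l²)/(v_i²−v_l²)² − (1−δ_ij)·2v_iv_j/(v_i²−v_j²)²]`. -/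
theorem hessian_FB_posDef (N : ℕ) (hN : 2 ≤ N) (ν : ℝ) (hν : -(1 / 2) < ν)
    (v u : Fin N → ℝ) (hv0 : ∀ i, v i ≠ 0)
    (hv : ∀ i j : Fin N, i ≠ j → (v i) ^ 2 ≠ (v j) ^ 2) :
    let H : Matrix (Fin N) (Fin N) ℝ := Matrix.of fun i j =>
      if i = j then
        1 + (2 * ν + 1) / (2 * (v i) ^ 2)
          + 2 * ∑ l ∈ Finset.univ.erase i, ((v i) ^ 2 + (v l) ^ 2) / ((v i) ^ 2 - (v l) ^ 2) ^ 2
      else -(2 * (2 * v i * v j / ((v i) ^ 2 - (v j) ^ 2) ^ 2))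
    (∑ i, ∑ j, u i * H i j * u j
        = ∑ i, (u i) ^ 2 * (1 + (2 * ν + 1) / (2 * (v i) ^ 2))
          + ∑ i, ∑ j ∈ Finset.univ.erase i,
              ((u i * v i - u j * v j) ^ 2 + (u i * v j - u j * v i) ^ 2)
                / ((v i) ^ 2 - (v j) ^ 2) ^ 2)
    ∧ (u ≠ 0 → 0 < ∑ i, ∑ j, u i * H i j * u j)
    ∧ H.PosDef := by
  intro H
  have hid : ∀ w : Fin N → ℝ, ∑ i, ∑ j, w i * H i j * w j
      = ∑ i, (w i) ^ 2 * (1 + (2 * ν + 1) / (2 * (v i) ^ 2))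
        + ∑ i, ∑ j ∈ Finset.univ.erase i,
            ((w i * v i - w j * v j) ^ 2 + (w i * v j - w j * v i) ^ 2)
              / ((v i) ^ 2 - (v j) ^ 2) ^ 2 :=
    fun w => hess_quadform_eq N ν v w
  have hpos : ∀ w : Fin N → ℝ, w ≠ 0 → 0 < ∑ i, ∑ j, w i * H i j * w j := by
    intro w hw
    rw [hid w]
    exact hess_quadform_pos N ν hν v w hv0 hw
  refine ⟨hid u, hpos u, ?_⟩
  have hherm : H.IsHermitian := by
    ext i j
    simp only [Matrix.conjTranspose_apply, star_trivial, H, Matrix.of_apply]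
    by_cases h : i = j
    · subst h; simp
    · rw [if_neg (fun hh => h hh.symm), if_neg h]
      ring_nf
  refine ⟨hherm, fun x hx => ?_⟩
  have := hpos x (by simpa using hx)
  simpa [dotProduct, Matrix.mulVec, Finset.mul_sum, mul_assoc, Finsupp.sum_fintype] using this
end

section
/- Let N ≥ 1 and α > −1. Let s_1 < s_2 < … < s_N be pairwise distinct positive real numbers satisfying the system s_i = (α + 1) + ∑_{j≠i} 2 s_i/(s_i − s_j) for every i = 1, …, N. Then s_1, …, s_N are exactly the N zeros of the generalized Laguerre polynomial L_N^{(α)}; equivalently, the monic polynomial ∏_{j=1}^N (x − s_j) equals (−1)^N N! · L_N^{(α)}(x). -/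
open Finset Polynomial

noncomputable def laguerre (N : ℕ) (α : ℝ) (x : ℝ) : ℝ :=
  ∑ k ∈ Finset.range (N + 1),
    (-1 : ℝ) ^ k * (∏ i ∈ Finset.Icc (k + 1) N, (α + i))
      / ((Nat.factorial (N - k)) * (Nat.factorial k)) * x ^ k

private lemma deriv_prod_XsubC {ι : Type*} [DecidableEq ι] (t : Finset ι) (c : ι → ℝ) :
    derivative (∏ i ∈ t, (X - C (c i))) = ∑ i ∈ t, ∏ j ∈ t.erase i, (X - C (c j)) := by
  induction t using Finset.induction_on with
  | empty => simp
  | @insert a t ha ih =>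
      rw [Finset.prod_insert ha, derivative_mul, ih, Finset.sum_insert ha,
        Finset.erase_insert ha]
      simp only [derivative_sub, derivative_X, derivative_C, sub_zero, one_mul]
      congr 1
      rw [Finset.mul_sum]
      refine Finset.sum_congr rfl (fun i hi => ?_)
      have hia : i ≠ a := fun h => ha (h ▸ hi)
      rw [Finset.erase_insert_of_ne hia.symm,
        Finset.prod_insert (fun h => ha (Finset.mem_of_mem_erase h))]

/-- positive, increasingly ordered reals satisfying
`s_i = (α+1) + ∑_{j≠i} 2s_i/(s_i − s_j)` are exactly the zeros of `L_N^{(α)}`;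
equivalently `∏ (x − s_j) = (−1)^N N! L_N^{(α)}(x)`. -/
theorem system_solutions_are_laguerre_zeros (N : ℕ) (hN : 1 ≤ N) (α : ℝ) (hα : -1 < α)
    (s : Fin N → ℝ) (hmono : StrictMono s) (hpos : ∀ i, 0 < s i)
    (hsys : ∀ i, s i = (α + 1) + ∑ j ∈ Finset.univ.erase i, 2 * s i / (s i - s j)) :
    (∀ i, laguerre N α (s i) = 0) ∧ (∀ x : ℝ, laguerre N α x = 0 → ∃ i, x = s i) ∧
      ∀ x : ℝ, ∏ j, (x - s j) = (-1 : ℝ) ^ N * (Nat.factorial N) * laguerre N α x := by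
  classical
  have hinj : Function.Injective s := hmono.injective
  set P : Polynomial ℝ := ∏ j, (X - C (s j)) with hPdef
  have hPmonic : P.Monic := monic_prod_of_monic _ _ (fun i _ => monic_X_sub_C _)
  have hPdeg : P.natDegree = N := by
    rw [hPdef, natDegree_prod _ _ (fun i _ => X_sub_C_ne_zero _)]
    simp
  have hdiff : ∀ i j : Fin N, i ≠ j → s i - s j ≠ 0 :=
    fun i j h => sub_ne_zero.mpr (fun e => h (hinj e))
  set Q : Polynomial ℝ :=
    X * derivative (derivative P) + (C (α + 1) - X) * derivative P + C (N : ℝ) * P with hQdef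
  -- coefficients of Q
  have hQcoeff : ∀ k : ℕ, Q.coeff k =
      ((k : ℝ) + 1) * ((k : ℝ) + α + 1) * P.coeff (k + 1) + ((N : ℝ) - k) * P.coeff k := by
    intro k
    cases k with
    | zero =>
        simp only [hQdef, coeff_add, sub_mul, coeff_sub, coeff_C_mul, mul_coeff_zero,
          coeff_X_zero, zero_mul, coeff_derivative, coeff_C_zero]
        push_cast
        ring
    | succ n =>
        simp only [hQdef, coeff_add, sub_mul, coeff_sub, coeff_C_mul, coeff_X_mul,
          coeff_derivative]
        push_cast
        ring
  -- Q vanishes at each s i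
  have hQroot : ∀ i, Q.eval (s i) = 0 := by
    intro i
    set Pi : Polynomial ℝ := ∏ j ∈ Finset.univ.erase i, (X - C (s j)) with hPi
    have hfac : P = (X - C (s i)) * Pi := by
      rw [hPdef, ← Finset.mul_prod_erase univ _ (Finset.mem_univ i)]
    have hD1 : derivative P = (X - C (s i)) * derivative Pi + Pi := by
      rw [hfac, derivative_mul, derivative_sub, derivative_X, derivative_C]
      ring
    have hD2 : derivative (derivative P)
        = (X - C (s i)) * derivative (derivative Pi) + 2 * derivative Pi := by
      rw [hD1, derivative_add, derivative_mul, derivative_sub, derivative_X, derivative_C]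
      ring
    have hP0 : P.eval (s i) = 0 := by rw [hfac]; simp
    have h1 : (derivative P).eval (s i) = Pi.eval (s i) := by rw [hD1]; simp
    have h2 : (derivative (derivative P)).eval (s i)
        = 2 * (derivative Pi).eval (s i) := by rw [hD2]; simp
    have hkey : ∀ j ∈ Finset.univ.erase i,
        ∏ k ∈ (Finset.univ.erase i).erase j, (s i - s k) = Pi.eval (s i) / (s i - s j) := by
      intro j hj
      have hji : j ≠ i := Finset.ne_of_mem_erase hj
      have hne : s i - s j ≠ 0 := hdiff i j (Ne.symm hji)
      rw [eq_div_iff hne, hPi, eval_prod]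
      simp only [eval_sub, eval_X, eval_C]
      exact Finset.prod_erase_mul _ _ hj
    have hPi' : (derivative Pi).eval (s i)
        = ∑ j ∈ Finset.univ.erase i, Pi.eval (s i) / (s i - s j) := by
      rw [hPi, deriv_prod_XsubC, eval_finset_sum]
      refine Finset.sum_congr rfl (fun j hj => ?_)
      rw [eval_prod]
      simp only [eval_sub, eval_X, eval_C]
      exact hkey j hj
    have hsys' : ∑ j ∈ Finset.univ.erase i, 2 * s i / (s i - s j) = s i - (α + 1) := by
      linarith [hsys i]
    rw [hQdef]
    simp only [eval_add, eval_mul, eval_sub, eval_X, eval_C]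
    rw [hP0, h1, h2, hPi']
    have hswap : s i * (2 * ∑ j ∈ Finset.univ.erase i, Pi.eval (s i) / (s i - s j))
        = Pi.eval (s i) * ∑ j ∈ Finset.univ.erase i, 2 * s i / (s i - s j) := by
      rw [Finset.mul_sum, Finset.mul_sum, Finset.mul_sum]
      exact Finset.sum_congr rfl (fun j _ => by ring)
    rw [hswap, hsys']
    ring
  -- Q = 0
  have hQ0 : Q = 0 := by
    by_contra hne
    refine hne (Polynomial.eq_zero_of_natDegree_lt_card_of_eval_eq_zero Q hinj hQroot ?_)
    rw [Fintype.card_fin, natDegree_lt_iff_degree_lt hne, degree_lt_iff_coeff_zero]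
    intro m hm
    rw [hQcoeff m]
    have h1 : P.coeff (m + 1) = 0 :=
      coeff_eq_zero_of_natDegree_lt (by rw [hPdeg]; omega)
    rcases eq_or_lt_of_le hm with h | h
    · subst h
      simp [h1]
    · have h2 : P.coeff m = 0 := coeff_eq_zero_of_natDegree_lt (by rw [hPdeg]; exact h)
      rw [h1, h2]
      ring
  -- coefficient recurrence
  have hrec : ∀ k : ℕ, ((k : ℝ) + 1) * ((k : ℝ) + α + 1) * P.coeff (k + 1)
      = ((N : ℝ) - k) * - P.coeff k := by
    intro k
    have := congrArg (fun p => Polynomial.coeff p k) hQ0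
    simp only [coeff_zero] at this
    rw [hQcoeff k] at this
    linarith
  -- coefficient formula
  have hcoeff : ∀ k, k ≤ N → P.coeff k =
      (-1 : ℝ) ^ (N - k) * (Nat.factorial N) /
        ((Nat.factorial k) * (Nat.factorial (N - k))) * ∏ i ∈ Icc (k + 1) N, (α + i) := by
    have H : ∀ m k : ℕ, k = N - m → k ≤ N → P.coeff k =
        (-1 : ℝ) ^ (N - k) * (Nat.factorial N) /
          ((Nat.factorial k) * (Nat.factorial (N - k))) * ∏ i ∈ Icc (k + 1) N, (α + i) := by
      intro m
      induction m with
      | zero =>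
          intro k hk hkN
          have hkeq : k = N := by omega
          subst hkeq
          rw [← hPdeg, hPmonic.coeff_natDegree, hPdeg]
          rw [Nat.sub_self, Finset.Icc_eq_empty (by omega), Finset.prod_empty]
          have hfac : ((Nat.factorial k : ℝ)) ≠ 0 := Nat.cast_ne_zero.mpr (Nat.factorial_ne_zero k)
          field_simp
          simp
      | succ m ih =>
          intro k hk hkN
          by_cases hNm : N ≤ m
          · exact ih k (by omega) hkN
          · have hkN' : k < N := by omega
            have hk1 : k + 1 = N - m := by omega
            have IH := ih (k + 1) hk1 (by omega)
            -- from the recurrence, express P.coeff k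
            have hNk : ((N : ℝ) - k) ≠ 0 := by
              have : (k : ℝ) < N := by exact_mod_cast hkN'
              linarith
            have hPk : P.coeff k
                = -(((k : ℝ) + 1) * ((k : ℝ) + α + 1) * P.coeff (k + 1)) / ((N : ℝ) - k) := by
              rw [eq_div_iff hNk]
              have := hrec k
              ring_nf
              ring_nf at this
              linarith
            rw [hPk, IH]
            -- now pure algebra; set d := N - (k+1)
            obtain ⟨d, hd⟩ : ∃ d, N = k + d + 1 := ⟨N - k - 1, by omega⟩
            subst hd
            have e1 : k + d + 1 - k = d + 1 := by omega
            have e2 : k + d + 1 - (k + 1) = d := by omega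
            rw [e1, e2]
            -- split the product
            have hmem : k + 1 ∈ Icc (k + 1) (k + d + 1) := by
              simp [Finset.mem_Icc]
            have hsplit : ∏ i ∈ Icc (k + 1) (k + d + 1), (α + i)
                = (α + (k + 1 : ℕ)) * ∏ i ∈ Icc (k + 2) (k + d + 1), (α + i) := by
              rw [← Finset.mul_prod_erase _ _ hmem, Finset.Icc_erase_left, ← Finset.Icc_add_one_left_eq_Ioc]
              rfl
            rw [hsplit]
            have hfk : ((Nat.factorial (k + 1) : ℝ)) = ((k : ℝ) + 1) * (Nat.factorial k) := by
              rw [Nat.factorial_succ]; push_cast; ring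
            have hfd : ((Nat.factorial (d + 1) : ℝ)) = ((d : ℝ) + 1) * (Nat.factorial d) := by
              rw [Nat.factorial_succ]; push_cast; ring
            have hpow : (-1 : ℝ) ^ (d + 1) = -(-1 : ℝ) ^ d := by
              rw [pow_succ]; ring
            have hNk' : ((k + d + 1 : ℕ) : ℝ) - (k : ℝ) = (d : ℝ) + 1 := by push_cast; ring
            rw [hfk, hfd, hpow, hNk']
            have hk0 : ((Nat.factorial k : ℝ)) ≠ 0 := Nat.cast_ne_zero.mpr (Nat.factorial_ne_zero k)
            have hd0 : ((Nat.factorial d : ℝ)) ≠ 0 := Nat.cast_ne_zero.mpr (Nat.factorial_ne_zero d)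
            have hk1' : ((k : ℝ) + 1) ≠ 0 := by positivity
            have hd1' : ((d : ℝ) + 1) ≠ 0 := by positivity
            field_simp
            push_cast
            ring
    intro k hk
    exact H (N - k) k (by omega) hk
  -- polynomial evaluation identity
  have hmain : ∀ x : ℝ, ∏ j, (x - s j) = (-1 : ℝ) ^ N * (Nat.factorial N) * laguerre N α x := by
    intro x
    have hevalP : P.eval x = ∏ j, (x - s j) := by
      rw [hPdef, eval_prod]
      simp
    rw [← hevalP, Polynomial.eval_eq_sum_range, hPdeg, laguerre, Finset.mul_sum]
    refine Finset.sum_congr rfl (fun k hk => ?_)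
    have hkN : k ≤ N := by
      have := Finset.mem_range.mp hk
      omega
    rw [hcoeff k hkN]
    have h2 : (-1 : ℝ) ^ k * (-1 : ℝ) ^ k = 1 := by
      rw [← pow_add, ← two_mul, pow_mul]
      norm_num
    have hsign : (-1 : ℝ) ^ (N - k) = (-1 : ℝ) ^ N * (-1 : ℝ) ^ k := by
      have h3 : (-1 : ℝ) ^ (N - k) * (-1 : ℝ) ^ k = (-1 : ℝ) ^ N := by
        rw [← pow_add]
        congr 1
        omega
      calc (-1 : ℝ) ^ (N - k) = (-1 : ℝ) ^ (N - k) * ((-1 : ℝ) ^ k * (-1 : ℝ) ^ k) := by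
              rw [h2, mul_one]
        _ = ((-1 : ℝ) ^ (N - k) * (-1 : ℝ) ^ k) * (-1 : ℝ) ^ k := by ring
        _ = (-1 : ℝ) ^ N * (-1 : ℝ) ^ k := by rw [h3]
    rw [hsign]
    have hk0 : ((Nat.factorial k : ℝ)) ≠ 0 := Nat.cast_ne_zero.mpr (Nat.factorial_ne_zero k)
    have hd0 : ((Nat.factorial (N - k) : ℝ)) ≠ 0 :=
      Nat.cast_ne_zero.mpr (Nat.factorial_ne_zero (N - k))
    field_simp
  refine ⟨?_, ?_, hmain⟩
  · intro i
    have h0 : ∏ j, (s i - s j) = 0 :=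
      Finset.prod_eq_zero (Finset.mem_univ i) (sub_self _)
    rw [hmain (s i)] at h0
    have hne : ((-1 : ℝ) ^ N * (Nat.factorial N)) ≠ 0 := by positivity
    exact (mul_eq_zero.mp h0).resolve_left hne
  · intro x hx
    have h0 : ∏ j, (x - s j) = 0 := by rw [hmain x, hx, mul_zero]
    obtain ⟨i, -, hi⟩ := Finset.prod_eq_zero_iff.mp h0
    exact ⟨i, by linarith [sub_eq_zero.mp hi]⟩
end

section
/- Let N ≥ 2 and α > −1, and let l_{N,1} < … < l_{N,N} denote the N zeros of the generalized Laguerre polynomial L_N^{(α)}. Then ∏_{i=1}^N L_{N−1}^{(α)}(l_{N,i}) = (−1)^{N(N−1)/2} ∏_{i=1}^{N−1} ((α + i)/(N − i))^{i}. -/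
open Finset

open Polynomial

noncomputable def lagC (N : ℕ) (α : ℝ) (k : ℕ) : ℝ :=
  (-1 : ℝ) ^ k * (∏ i ∈ Finset.Icc (k + 1) N, (α + i))
      / ((Nat.factorial (N - k)) * (Nat.factorial k))

noncomputable def lagP (N : ℕ) (α : ℝ) : Polynomial ℝ :=
  ∑ k ∈ Finset.range (N + 1), Polynomial.C (lagC N α k) * Polynomial.X ^ k

lemma coeff_lagP (N : ℕ) (α : ℝ) (k : ℕ) :
    (lagP N α).coeff k = if k ≤ N then lagC N α k else 0 := by
  simp only [lagP, finset_sum_coeff, coeff_C_mul, coeff_X_pow, mul_ite, mul_one, mul_zero]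
  rw [Finset.sum_ite_eq (Finset.range (N+1)) k (fun j => lagC N α j)]
  simp [Nat.lt_succ_iff]

lemma eval_lagP (N : ℕ) (α : ℝ) (x : ℝ) : (lagP N α).eval x = laguerre N α x := by
  simp [lagP, laguerre, lagC, eval_finset_sum]

lemma lagC_top (N : ℕ) (α : ℝ) : lagC N α N = (-1:ℝ)^N / N.factorial := by
  simp [lagC]

lemma lagC_top_ne (N : ℕ) (α : ℝ) : lagC N α N ≠ 0 := by
  rw [lagC_top]
  positivity

lemma natDegree_lagP (N : ℕ) (α : ℝ) : (lagP N α).natDegree = N := by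
  apply le_antisymm
  · rw [Polynomial.natDegree_le_iff_coeff_eq_zero]
    intro m hm
    rw [coeff_lagP]
    simp [Nat.not_le.mpr hm, hm.not_ge]
  · apply Polynomial.le_natDegree_of_ne_zero
    rw [coeff_lagP]
    simpa using lagC_top_ne N α

lemma lagP_eq_prod {N : ℕ} {α : ℝ} {l : Fin N → ℝ} (hinj : Function.Injective l)
    (hzero : ∀ i, laguerre N α (l i) = 0) :
    lagP N α = Polynomial.C ((-1:ℝ)^N / N.factorial) * ∏ i, (Polynomial.X - Polynomial.C (l i)) := by
  set q : Polynomial ℝ := Polynomial.C ((-1:ℝ)^N / N.factorial) * ∏ i, (Polynomial.X - Polynomial.C (l i)) with hq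
  have hqmon : (∏ i, (Polynomial.X - Polynomial.C (l i)) : Polynomial ℝ).Monic :=
    monic_prod_of_monic _ _ (fun i _ => monic_X_sub_C (l i))
  have hqdeg : (∏ i, (Polynomial.X - Polynomial.C (l i)) : Polynomial ℝ).natDegree = N := by
    rw [natDegree_prod _ _ (fun i _ => X_sub_C_ne_zero (l i))]
    simp
  rcases eq_or_ne (lagP N α - q) 0 with hd | hd
  · exact sub_eq_zero.mp hd
  have h1 : (lagP N α - q).coeff N = 0 := by
    have hc1 : (∏ i, (Polynomial.X - Polynomial.C (l i)) : Polynomial ℝ).coeff N = 1 := by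
      have := hqmon.coeff_natDegree
      rwa [hqdeg] at this
    have hc : q.coeff N = (-1:ℝ)^N / N.factorial := by
      rw [hq, Polynomial.coeff_C_mul, hc1, mul_one]
    rw [Polynomial.coeff_sub, coeff_lagP, if_pos le_rfl, lagC_top, hc, sub_self]
  have h2 : (lagP N α - q).natDegree ≤ N := by
    apply Polynomial.natDegree_sub_le_iff_left _ |>.mpr
    · rw [natDegree_lagP]
    · rw [Polynomial.natDegree_C_mul (by positivity), hqdeg]
  have h3 : (lagP N α - q).natDegree < N := by
    refine lt_of_le_of_ne h2 (fun he => hd ?_)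
    rw [← Polynomial.leadingCoeff_eq_zero, Polynomial.leadingCoeff, he]
    exact h1
  have hz : lagP N α - q = 0 := by
    apply Polynomial.eq_zero_of_natDegree_lt_card_of_eval_eq_zero _ hinj
    · intro i
      simp only [eval_sub, eval_lagP, hzero i, hq, eval_mul, eval_C, eval_prod, eval_sub, eval_X]
      rw [Finset.prod_eq_zero (Finset.mem_univ i) (by ring)]
      ring
    · rwa [Fintype.card_fin]
  exact sub_eq_zero.mp hz

lemma prodIcc_top {α : ℝ} {k M : ℕ} (h : k ≤ M) :
    (∏ i ∈ Finset.Icc (k+1) (M+1), (α + (i:ℝ))) = (∏ i ∈ Finset.Icc (k+1) M, (α + (i:ℝ))) * (α + (M+1)) := by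
  rw [Finset.prod_Icc_succ_top (by omega)]
  push_cast
  ring_nf

lemma prodIcc_bot {α : ℝ} {k M : ℕ} (h : k ≤ M) :
    (∏ i ∈ Finset.Icc k M, (α + (i:ℝ))) = (α + k) * ∏ i ∈ Finset.Icc (k+1) M, (α + (i:ℝ)) := by
  rw [← Finset.Ico_add_one_right_eq_Icc, Finset.prod_eq_prod_Ico_succ_bot (by omega), Finset.Ico_add_one_right_eq_Icc]

lemma lagC_succ_right {N k : ℕ} (α : ℝ) (h : k ≤ N) :
    (α + (N:ℝ) + 1) * lagC N α k = ((N:ℝ) + 1 - (k:ℝ)) * lagC (N+1) α k := by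
  obtain ⟨m, rfl⟩ : ∃ m, N = k + m := ⟨N - k, by omega⟩
  unfold lagC
  have e1 : k + m - k = m := by omega
  have e2 : k + m + 1 - k = m + 1 := by omega
  rw [e1, e2, prodIcc_top (by omega : k ≤ k + m)]
  have hm : ((m.factorial : ℝ)) ≠ 0 := Nat.cast_ne_zero.mpr (Nat.factorial_ne_zero m)
  have hk : ((k.factorial : ℝ)) ≠ 0 := Nat.cast_ne_zero.mpr (Nat.factorial_ne_zero k)
  rw [Nat.factorial_succ]
  push_cast
  field_simp
  ring

lemma deriv_lagP (N : ℕ) (α : ℝ) :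
    Polynomial.X * Polynomial.derivative (lagP (N+1) α)
      = Polynomial.C ((N:ℝ)+1) * lagP (N+1) α - Polynomial.C (α+(N:ℝ)+1) * lagP N α := by
  ext k
  rw [Polynomial.coeff_sub, Polynomial.coeff_C_mul, Polynomial.coeff_C_mul]
  rcases k with _ | k
  · rw [Polynomial.mul_coeff_zero, Polynomial.coeff_X_zero, zero_mul]
    rw [coeff_lagP, coeff_lagP, if_pos (by omega), if_pos (by omega)]
    have := lagC_succ_right (N := N) (k := 0) α (by omega)
    push_cast at this ⊢
    linarith [this]
  · rw [Polynomial.coeff_X_mul, Polynomial.coeff_derivative]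
    rw [coeff_lagP, coeff_lagP]
    by_cases h1 : k + 1 ≤ N
    · rw [if_pos (by omega : k+1 ≤ N+1), if_pos h1]
      have := lagC_succ_right (N := N) (k := k+1) α h1
      push_cast at this ⊢
      linarith [this]
    · by_cases h2 : k + 1 ≤ N + 1
      · rw [if_pos h2, if_neg h1]
        have hk : k = N := by omega
        subst hk
        push_cast
        ring
      · rw [if_neg h2, if_neg (by omega : ¬ k+1 ≤ N)]
        ring

lemma fact_ne (n : ℕ) : ((n.factorial : ℝ)) ≠ 0 := Nat.cast_ne_zero.mpr (Nat.factorial_ne_zero n)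

lemma lagC_rec_mid {N j : ℕ} (α : ℝ) (h : j + 1 ≤ N) :
    ((N:ℝ)+2) * lagC (N+2) α (j+1)
      = (α+2*N+3) * lagC (N+1) α (j+1) - lagC (N+1) α j - (α+(N:ℝ)+1) * lagC N α (j+1) := by
  obtain ⟨m, rfl⟩ : ∃ m, N = j + 1 + m := ⟨N - (j+1), by omega⟩
  unfold lagC
  have e1 : j + 1 + m + 2 - (j + 1) = m + 2 := by omega
  have e2 : j + 1 + m + 1 - (j + 1) = m + 1 := by omega
  have e3 : j + 1 + m - (j + 1) = m := by omega
  have e4 : j + 1 + m + 1 - j = m + 2 := by omega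
  rw [e1, e2, e3, e4]
  have p2 : (∏ i ∈ Finset.Icc (j+1+1) (j+1+m+2), (α+(i:ℝ)))
      = ((∏ i ∈ Finset.Icc (j+1+1) (j+1+m), (α+(i:ℝ))) * (α + (j+1+m+1:ℕ))) * (α + (j+1+m+2:ℕ)) := by
    rw [show j+1+m+2 = (j+1+m+1)+1 from rfl]
    rw [prodIcc_top (by omega), prodIcc_top (by omega)]
    push_cast; ring
  have p1 : (∏ i ∈ Finset.Icc (j+1+1) (j+1+m+1), (α+(i:ℝ)))
      = (∏ i ∈ Finset.Icc (j+1+1) (j+1+m), (α+(i:ℝ))) * (α + (j+1+m+1:ℕ)) := by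
    rw [prodIcc_top (by omega)]
    push_cast; ring
  have p0 : (∏ i ∈ Finset.Icc (j+1) (j+1+m+1), (α+(i:ℝ)))
      = (α + (j+1:ℕ)) * ((∏ i ∈ Finset.Icc (j+1+1) (j+1+m), (α+(i:ℝ))) * (α + (j+1+m+1:ℕ))) := by
    rw [prodIcc_bot (by omega), p1]
  rw [p2, p1, p0]
  have hm := fact_ne m
  have hj := fact_ne j
  rw [show (m+2).factorial = (m+2)*((m+1)*m.factorial) by simp [Nat.factorial_succ],
      show (m+1).factorial = (m+1)*m.factorial by simp [Nat.factorial_succ],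
      show (j+1).factorial = (j+1)*j.factorial by simp [Nat.factorial_succ]]
  push_cast
  field_simp
  ring

lemma lagC_rec_zero (N : ℕ) (α : ℝ) :
    ((N:ℝ)+2) * lagC (N+2) α 0
      = (α+2*N+3) * lagC (N+1) α 0 - (α+(N:ℝ)+1) * lagC N α 0 := by
  unfold lagC
  simp only [Nat.sub_zero, Nat.factorial_zero, pow_zero, one_mul, Nat.cast_one, mul_one]
  have p2 : (∏ i ∈ Finset.Icc (0+1) (N+2), (α+(i:ℝ)))
      = ((∏ i ∈ Finset.Icc (0+1) N, (α+(i:ℝ))) * (α + (N+1:ℕ))) * (α + (N+2:ℕ)) := by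
    rw [show N+2 = (N+1)+1 from rfl, prodIcc_top (by omega), prodIcc_top (by omega)]
    push_cast; ring
  have p1 : (∏ i ∈ Finset.Icc (0+1) (N+1), (α+(i:ℝ)))
      = (∏ i ∈ Finset.Icc (0+1) N, (α+(i:ℝ))) * (α + (N+1:ℕ)) := by
    rw [prodIcc_top (by omega)]
    push_cast; ring
  simp only [zero_add] at p2 p1
  rw [p2, p1]
  have hN := fact_ne N
  rw [show (N+2).factorial = (N+2)*((N+1)*N.factorial) by simp [Nat.factorial_succ],
      show (N+1).factorial = (N+1)*N.factorial by simp [Nat.factorial_succ]]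
  push_cast
  field_simp
  ring

lemma lagC_rec_top1 (N : ℕ) (α : ℝ) :
    ((N:ℝ)+2) * lagC (N+2) α (N+1)
      = (α+2*N+3) * lagC (N+1) α (N+1) - lagC (N+1) α N := by
  unfold lagC
  have e1 : N + 2 - (N + 1) = 1 := by omega
  have e2 : N + 1 - (N + 1) = 0 := by omega
  have e3 : N + 1 - N = 1 := by omega
  rw [e1, e2, e3]
  rw [Finset.Icc_self, Finset.prod_singleton, Finset.Icc_eq_empty (by omega), Finset.prod_empty,
      show Finset.Icc (N+1) (N+1) = {N+1} from Finset.Icc_self _, Finset.prod_singleton]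
  have hN := fact_ne N
  rw [show (N+1).factorial = (N+1)*N.factorial by simp [Nat.factorial_succ]]
  rw [pow_succ]
  push_cast
  field_simp
  ring

lemma lagC_rec_top2 (N : ℕ) (α : ℝ) :
    ((N:ℝ)+2) * lagC (N+2) α (N+2) = - lagC (N+1) α (N+1) := by
  unfold lagC
  simp only [Nat.sub_self, Nat.factorial_zero, Finset.Icc_eq_empty (by omega : ¬ N+2+1 ≤ N+2),
    Finset.Icc_eq_empty (by omega : ¬ N+1+1 ≤ N+1), Finset.prod_empty, Nat.cast_one, one_mul]
  rw [show (N+2).factorial = (N+2)*(N+1).factorial by simp [Nat.factorial_succ]]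
  have h1 := fact_ne (N+1)
  rw [pow_succ]
  push_cast
  field_simp

lemma rec_lagP (N : ℕ) (α : ℝ) :
    Polynomial.C ((N:ℝ)+2) * lagP (N+2) α
      = (Polynomial.C (α+2*N+3) - Polynomial.X) * lagP (N+1) α
        - Polynomial.C (α+(N:ℝ)+1) * lagP N α := by
  ext k
  rw [sub_mul, Polynomial.coeff_sub, Polynomial.coeff_sub, Polynomial.coeff_C_mul,
    Polynomial.coeff_C_mul, Polynomial.coeff_C_mul]
  rcases k with _ | k
  · rw [Polynomial.mul_coeff_zero, Polynomial.coeff_X_zero, zero_mul]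
    rw [coeff_lagP, coeff_lagP, coeff_lagP, if_pos (by omega), if_pos (by omega), if_pos (by omega)]
    have := lagC_rec_zero N α
    linarith [this]
  · rw [Polynomial.coeff_X_mul]
    rw [coeff_lagP, coeff_lagP, coeff_lagP, coeff_lagP]
    by_cases h1 : k + 1 ≤ N
    · rw [if_pos (by omega : k+1 ≤ N+2), if_pos (by omega : k+1 ≤ N+1), if_pos (by omega : k ≤ N+1), if_pos h1]
      have := lagC_rec_mid α (j := k) (N := N) h1
      linarith [this]
    · by_cases h2 : k + 1 ≤ N + 1
      · rw [if_pos (by omega : k+1 ≤ N+2), if_pos (by omega : k+1 ≤ N+1), if_pos (by omega : k ≤ N+1), if_neg h1]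
        rw [show k = N by omega]
        have := lagC_rec_top1 N α
        linarith [this]
      · by_cases h3 : k + 1 ≤ N + 2
        · rw [if_pos (by omega : k+1 ≤ N+2), if_neg h2, if_pos (by omega : k ≤ N+1), if_neg (by omega : ¬ k+1 ≤ N)]
          rw [show k = N+1 by omega, show N+1+1 = N+2 from rfl]
          have := lagC_rec_top2 N α
          linarith [this]
        · rw [if_neg (by omega : ¬ k+1 ≤ N+2), if_neg (by omega : ¬ k+1 ≤ N+1), if_neg (by omega : ¬ k ≤ N+1), if_neg (by omega : ¬ k+1 ≤ N)]
          ring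

lemma erase_prod_sign {N : ℕ} {l : Fin (N+1) → ℝ} (hmono : StrictMono l) (i : Fin (N+1)) :
    0 < (-1:ℝ)^(N - (i:ℕ)) * ∏ j ∈ Finset.univ.erase i, (l i - l j) := by
  classical
  have hsplit : (Finset.univ.erase i : Finset (Fin (N+1)))
      = Finset.Iio i ∪ Finset.Ioi i := by
    ext j
    constructor
    · intro hj
      simp only [Finset.mem_erase] at hj
      rcases lt_or_gt_of_ne hj.1 with h | h
      · exact Finset.mem_union_left _ (Finset.mem_Iio.mpr h)
      · exact Finset.mem_union_right _ (Finset.mem_Ioi.mpr h)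
    · intro hj
      rcases Finset.mem_union.mp hj with h | h
      · exact Finset.mem_erase.mpr ⟨(Finset.mem_Iio.mp h).ne, Finset.mem_univ _⟩
      · exact Finset.mem_erase.mpr ⟨(Finset.mem_Ioi.mp h).ne', Finset.mem_univ _⟩
  have hdisj : Disjoint (Finset.Iio i) (Finset.Ioi i) := by
    rw [Finset.disjoint_left]
    intro j hj hj'
    simp only [Finset.mem_Iio, Finset.mem_Ioi] at hj hj'
    exact absurd hj' hj.asymm
  rw [hsplit, Finset.prod_union hdisj]
  have h1 : 0 < ∏ j ∈ Finset.Iio i, (l i - l j) :=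
    Finset.prod_pos (fun j hj => sub_pos.mpr (hmono (Finset.mem_Iio.mp hj)))
  have h2 : ∏ j ∈ Finset.Ioi i, (l i - l j)
      = (-1:ℝ)^(N - (i:ℕ)) * ∏ j ∈ Finset.Ioi i, (l j - l i) := by
    rw [show N - (i:ℕ) = (Finset.Ioi i).card by rw [Fin.card_Ioi i]; omega]
    rw [← Finset.prod_const (-1:ℝ), ← Finset.prod_mul_distrib]
    exact Finset.prod_congr rfl (fun j _ => by ring)
  have h3 : 0 < ∏ j ∈ Finset.Ioi i, (l j - l i) :=
    Finset.prod_pos (fun j hj => sub_pos.mpr (hmono (Finset.mem_Ioi.mp hj)))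
  have h4 : ((-1:ℝ)^(N - (i:ℕ)))^2 = 1 := by
    rw [← pow_mul, mul_comm, pow_mul]
    norm_num
  calc 0 < ((-1:ℝ)^(N - (i:ℕ)))^2 * (∏ j ∈ Finset.Iio i, (l i - l j))
            * ∏ j ∈ Finset.Ioi i, (l j - l i) := by
        rw [h4, one_mul]
        exact mul_pos h1 h3
    _ = (-1:ℝ)^(N - (i:ℕ)) * ((∏ j ∈ Finset.Iio i, (l i - l j)) * ∏ j ∈ Finset.Ioi i, (l i - l j)) := by
        rw [h2]; ring

lemma eval_deriv_prod {N : ℕ} (l : Fin N → ℝ) (hinj : Function.Injective l) (i : Fin N) :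
    Polynomial.eval (l i) (Polynomial.derivative (∏ j, (Polynomial.X - Polynomial.C (l j))))
      = ∏ j ∈ Finset.univ.erase i, (l i - l j) := by
  classical
  have hmem : l i ∈ Multiset.map l Finset.univ.val :=
    Multiset.mem_map_of_mem l (Finset.mem_val.mpr (Finset.mem_univ i))
  have h := Polynomial.eval_multiset_prod_X_sub_C_derivative hmem
  have hL : (∏ j, (Polynomial.X - Polynomial.C (l j)) : Polynomial ℝ)
      = (Multiset.map (fun a => Polynomial.X - Polynomial.C a) (Multiset.map l Finset.univ.val)).prod := by
    rw [Multiset.map_map, Finset.prod_eq_multiset_prod]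
    rfl
  rw [hL, h, ← Multiset.map_erase l hinj, Multiset.map_map, Finset.prod_eq_multiset_prod,
    Finset.erase_val]
  rfl

/-- Sign of `L_N` at the `i`-th zero of `L_{N+1}`: `(-1)^i L_N(l_i) > 0`. -/
lemma sign_at_zero {N : ℕ} {α : ℝ} (hα : -1 < α) {l : Fin (N+1) → ℝ}
    (hmono : StrictMono l) (hpos : ∀ i, 0 < l i)
    (hzero : ∀ i, laguerre (N+1) α (l i) = 0) (i : Fin (N+1)) :
    0 < (-1:ℝ)^(i:ℕ) * laguerre N α (l i) := by
  have hfac := lagP_eq_prod hmono.injective hzero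
  have hderiv := congrArg (Polynomial.eval (l i)) (deriv_lagP N α)
  simp only [Polynomial.eval_mul, Polynomial.eval_sub, Polynomial.eval_X, Polynomial.eval_C,
    eval_lagP, hzero i, mul_zero] at hderiv
  -- hderiv : l i * eval (derivative (lagP (N+1) α)) (l i) = 0 - (α+N+1) * laguerre N α (l i)
  have hD : Polynomial.eval (l i) (Polynomial.derivative (lagP (N+1) α))
      = ((-1:ℝ)^(N+1) / (N+1).factorial) * ∏ j ∈ Finset.univ.erase i, (l i - l j) := by
    rw [hfac, Polynomial.derivative_C_mul, Polynomial.eval_mul, Polynomial.eval_C,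
      eval_deriv_prod l hmono.injective i]
  rw [hD] at hderiv
  have hden : (0:ℝ) < α + (N:ℕ) + 1 := by
    have : (0:ℝ) ≤ (N:ℕ) := Nat.cast_nonneg N
    linarith
  have hlag : laguerre N α (l i)
      = -(l i) * ((-1:ℝ)^(N+1) / (N+1).factorial) * (∏ j ∈ Finset.univ.erase i, (l i - l j))
        / (α + N + 1) := by
    field_simp at hderiv ⊢
    linarith [hderiv]
  rw [hlag]
  have hE := erase_prod_sign hmono i
  have hfne : (0:ℝ) < ((N+1).factorial : ℝ) := by positivity
  have hsign : (-1:ℝ)^(i:ℕ) * (-(l i) * ((-1:ℝ)^(N+1) / (N+1).factorial)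
        * (∏ j ∈ Finset.univ.erase i, (l i - l j)) / (α + N + 1))
      = (l i / (((N+1).factorial : ℝ) * (α + N + 1)))
        * ((-1:ℝ)^((i:ℕ) + N + 2) * ∏ j ∈ Finset.univ.erase i, (l i - l j)) := by
    rw [pow_add, pow_add, pow_succ]
    field_simp
    ring
  rw [hsign]
  have hexp : (-1:ℝ)^((i:ℕ) + N + 2) = (-1:ℝ)^(N - (i:ℕ)) := by
    have hle : (i:ℕ) ≤ N := by omega
    rw [show (i:ℕ) + N + 2 = (N - (i:ℕ)) + 2*((i:ℕ)+1) by omega, pow_add, pow_mul]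
    norm_num
  rw [hexp]
  exact mul_pos (div_pos (hpos i) (mul_pos hfne hden)) hE

lemma exists_inner_zeros {N : ℕ} {α : ℝ} (hα : -1 < α) {l : Fin (N+1) → ℝ}
    (hmono : StrictMono l) (hpos : ∀ i, 0 < l i)
    (hzero : ∀ i, laguerre (N+1) α (l i) = 0) :
    ∀ i : Fin N, ∃ x, x ∈ Set.Ioo (l i.castSucc) (l i.succ) ∧ laguerre N α x = 0 := by
  intro i
  have hab : l i.castSucc < l i.succ := hmono (Fin.castSucc_lt_succ (i := i))
  have hcont : ContinuousOn (fun x => laguerre N α x) (Set.Icc (l i.castSucc) (l i.succ)) := by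
    have : (fun x => laguerre N α x) = fun x => (lagP N α).eval x := by
      funext x; rw [eval_lagP]
    rw [this]
    exact ((lagP N α).continuous_aeval).continuousOn
  have hsa := sign_at_zero hα hmono hpos hzero i.castSucc
  have hsb := sign_at_zero hα hmono hpos hzero i.succ
  rw [Fin.coe_castSucc] at hsa
  rw [Fin.val_succ] at hsb
  rcases Nat.even_or_odd (i:ℕ) with he | ho
  · have h1 : 0 < laguerre N α (l i.castSucc) := by
      rwa [he.neg_one_pow, one_mul] at hsa
    have h2 : laguerre N α (l i.succ) < 0 := by
      have : Odd ((i:ℕ)+1) := he.add_one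
      rw [this.neg_one_pow, neg_one_mul, lt_neg, neg_zero] at hsb
      exact hsb
    have := intermediate_value_Ioo' hab.le hcont
    have h0 : (0:ℝ) ∈ Set.Ioo (laguerre N α (l i.succ)) (laguerre N α (l i.castSucc)) := ⟨h2, h1⟩
    obtain ⟨x, hx, hfx⟩ := this h0
    exact ⟨x, hx, hfx⟩
  · have h1 : laguerre N α (l i.castSucc) < 0 := by
      rw [ho.neg_one_pow, neg_one_mul, lt_neg, neg_zero] at hsa
      exact hsa
    have h2 : 0 < laguerre N α (l i.succ) := by
      have : Even ((i:ℕ)+1) := ho.add_one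
      rwa [this.neg_one_pow, one_mul] at hsb
    have := intermediate_value_Ioo hab.le hcont
    obtain ⟨x, hx, hfx⟩ := this (⟨h1, h2⟩ : (0:ℝ) ∈ Set.Ioo _ _)
    exact ⟨x, hx, hfx⟩

lemma prod_Icc_one {M : ℕ} (f : ℕ → ℝ) :
    ∏ i ∈ Finset.Icc 1 M, f i = ∏ j ∈ Finset.range M, f (j+1) := by
  rw [← Finset.Ico_add_one_right_eq_Icc, Finset.prod_Ico_eq_prod_range]
  have e : M + 1 - 1 = M := rfl
  rw [e]
  exact Finset.prod_congr rfl (fun j _ => by rw [add_comm])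

lemma key_reflect (M : ℕ) :
    ∏ i ∈ Finset.Icc 1 M, ((M:ℝ)+1-i)^i = ∏ j ∈ Finset.range M, ((j+1:ℕ):ℝ)^(M-j) := by
  rw [prod_Icc_one]
  rw [← Finset.prod_range_reflect (fun j => ((j+1:ℕ):ℝ)^(M-j)) M]
  refine Finset.prod_congr rfl (fun j hj => ?_)
  have hjM : j < M := Finset.mem_range.mp hj
  have e1 : M - 1 - j + 1 = M - j := by omega
  have e2 : M - (M - 1 - j) = j + 1 := by omega
  rw [e1, e2]
  congr 1
  push_cast [Nat.cast_sub hjM.le]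
  ring

lemma Gden (N : ℕ) (hN : 1 ≤ N) :
    ∏ i ∈ Finset.Icc 1 N, ((N:ℝ) + 1 - i)^i
      = (N.factorial : ℝ) * ∏ i ∈ Finset.Icc 1 (N-1), ((N:ℝ) - i)^i := by
  obtain ⟨M, rfl⟩ : ∃ M, N = M + 1 := ⟨N - 1, by omega⟩
  have e0 : M + 1 - 1 = M := rfl
  rw [e0, key_reflect (M+1)]
  have h2 : ∏ i ∈ Finset.Icc 1 M, (((M+1:ℕ):ℝ) - i)^i
      = ∏ j ∈ Finset.range M, ((j+1:ℕ):ℝ)^(M-j) := by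
    rw [← key_reflect M]
    refine Finset.prod_congr rfl (fun i _ => ?_)
    congr 1
    push_cast
    ring
  rw [h2]
  have h3 : ∏ j ∈ Finset.range (M+1), ((j+1:ℕ):ℝ)^(M+1-j)
      = (∏ j ∈ Finset.range (M+1), ((j+1:ℕ):ℝ)^(M-j)) * ∏ j ∈ Finset.range (M+1), ((j+1:ℕ):ℝ) := by
    rw [← Finset.prod_mul_distrib]
    refine Finset.prod_congr rfl (fun j hj => ?_)
    have : M + 1 - j = (M - j) + 1 := by
      have := Finset.mem_range.mp hj; omega
    rw [this, pow_succ]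
  have h4 : ∏ j ∈ Finset.range (M+1), ((j+1:ℕ):ℝ) = ((M+1).factorial : ℝ) := by
    rw [← Nat.cast_prod]
    norm_cast
    exact Finset.prod_range_add_one_eq_factorial (M+1)
  have h5 : ∏ j ∈ Finset.range (M+1), ((j+1:ℕ):ℝ)^(M-j)
      = ∏ j ∈ Finset.range M, ((j+1:ℕ):ℝ)^(M-j) := by
    rw [Finset.prod_range_succ, Nat.sub_self, pow_zero, mul_one]
  rw [h3, h4, h5]
  ring

lemma tri_step (M : ℕ) : (M+2)*(M+1)/2 = (M+1)*M/2 + (M+1) := by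
  have h2 : 2 ∣ M*(M+1) := (Nat.even_mul_succ_self M).two_dvd
  have e1 : (M+2)*(M+1) = M*(M+1) + 2*(M+1) := by ring
  have e2 : (M+1)*M = M*(M+1) := by ring
  omega

lemma rhs_step (N : ℕ) (hN : 1 ≤ N) (α : ℝ) (hα : -1 < α) :
    (-1:ℝ)^((N+1)*N/2) * ∏ i ∈ Finset.Icc 1 N, ((α+i)/((N:ℝ)+1-i))^i
      = ((-1:ℝ)^N * (α+(N:ℝ))^N / N.factorial)
        * ((-1:ℝ)^(N*(N-1)/2) * ∏ i ∈ Finset.Icc 1 (N-1), ((α+i)/((N:ℝ)-i))^i) := by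
  obtain ⟨M, rfl⟩ : ∃ M, N = M + 1 := ⟨N - 1, by omega⟩
  have e0 : M + 1 - 1 = M := rfl
  rw [e0]
  have hsign : (M+1+1)*(M+1)/2 = (M+1)*M/2 + (M+1) := tri_step M
  -- split quotient powers
  simp only [div_pow, Finset.prod_div_distrib]
  have hnum : ∏ i ∈ Finset.Icc 1 (M+1), (α+(i:ℝ))^i
      = (∏ i ∈ Finset.Icc 1 M, (α+(i:ℝ))^i) * (α+((M+1:ℕ):ℝ))^(M+1) := by
    rw [Finset.prod_Icc_succ_top (by omega)]
  have hden := Gden (M+1) (by omega)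
  rw [e0] at hden
  have hden' : ∏ i ∈ Finset.Icc 1 (M+1), (((M+1:ℕ):ℝ)+1-i)^i
      = ((M+1).factorial : ℝ) * ∏ i ∈ Finset.Icc 1 M, (((M+1:ℕ):ℝ)-i)^i := hden
  rw [hnum, hden', hsign, pow_add]
  have hBpos : (0:ℝ) < ∏ i ∈ Finset.Icc 1 M, (((M+1:ℕ):ℝ)-i)^i := by
    apply Finset.prod_pos
    intro i hi
    have := (Finset.mem_Icc.mp hi).2
    have : (i:ℝ) ≤ M := by exact_mod_cast this
    have : (0:ℝ) < ((M+1:ℕ):ℝ) - i := by push_cast; linarith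
    positivity
  have hfpos : (0:ℝ) < ((M+1).factorial : ℝ) := by positivity
  field_simp

lemma coeff_ratio (N : ℕ) (α : ℝ) :
    ((-1:ℝ)^N / N.factorial)^(N+1) * (-(α+(N:ℝ))/((N:ℝ)+1))^N
      = ((-1:ℝ)^N * (α+(N:ℝ))^N / N.factorial) * ((-1:ℝ)^(N+1) / ((N+1).factorial : ℝ))^N := by
  have hf : ((N.factorial:ℝ)) ≠ 0 := fact_ne N
  have hN1 : ((N:ℝ)+1) ≠ 0 := by positivity
  rw [Nat.factorial_succ]
  push_cast
  rw [div_pow, div_pow, div_pow, mul_pow, ← pow_mul, ← pow_mul, neg_pow,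
    show N*(N+1) = (N+1)*N by ring]
  field_simp
  rw [show (-(α+(N:ℝ))) = -1*(α+(N:ℝ)) by ring, mul_pow]
  ring

lemma laguerre_one (α x : ℝ) : laguerre 1 α x = (α + 1) - x := by
  rw [laguerre]
  rw [Finset.sum_range_succ, Finset.sum_range_one]
  rw [show Finset.Icc 1 1 = {1} by decide, show Finset.Icc 2 1 = ∅ by decide]
  norm_num [Nat.factorial]
  ring

lemma laguerre_two_special (α : ℝ) : laguerre 2 α (α+1) = -(α+1)/2 := by
  rw [laguerre]
  rw [Finset.sum_range_succ, Finset.sum_range_succ, Finset.sum_range_one]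
  rw [show Finset.Icc 1 2 = {1, 2} by decide, show Finset.Icc 2 2 = {2} by decide,
    show Finset.Icc 3 2 = ∅ by decide]
  norm_num [Nat.factorial]
  ring

lemma base_case {α : ℝ} {l : Fin 2 → ℝ} (hmono : StrictMono l)
    (hzero : ∀ i, laguerre 2 α (l i) = 0) :
    ∏ i, laguerre 1 α (l i) = -(α+1) := by
  have hfac := lagP_eq_prod hmono.injective hzero
  have heval := congrArg (Polynomial.eval (α+1)) hfac
  rw [eval_lagP, Polynomial.eval_mul, Polynomial.eval_C, Polynomial.eval_prod] at heval
  simp only [Polynomial.eval_sub, Polynomial.eval_X, Polynomial.eval_C] at heval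
  rw [laguerre_two_special] at heval
  have h2 : ∏ i : Fin 2, (α + 1 - l i) = -(α+1) := by
    rw [Fin.prod_univ_two]
    norm_num at heval
    linarith [heval]
  calc ∏ i, laguerre 1 α (l i) = ∏ i : Fin 2, (α + 1 - l i) := by
        refine Finset.prod_congr rfl (fun i _ => ?_)
        rw [laguerre_one]
    _ = -(α+1) := h2

lemma laguerre_rec_at_zero {N : ℕ} (hN : 2 ≤ N) {α x : ℝ} (hx : laguerre N α x = 0) :
    laguerre (N+1) α x = (-(α+(N:ℝ))/((N:ℝ)+1)) * laguerre (N-1) α x := by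
  obtain ⟨M, rfl⟩ : ∃ M, N = M+2 := ⟨N-2, by omega⟩
  have h := congrArg (Polynomial.eval x) (rec_lagP (M+1) α)
  simp only [Polynomial.eval_mul, Polynomial.eval_sub, Polynomial.eval_C, Polynomial.eval_X,
    eval_lagP] at h
  rw [show M+1+2 = M+2+1 from rfl, show M+1+1 = M+2 from rfl, hx, mul_zero] at h
  have e1 : M+2-1 = M+1 := rfl
  rw [e1]
  have hne : ((M:ℝ)+2)+1 ≠ 0 := by positivity
  push_cast at h ⊢
  rw [div_mul_eq_mul_div, eq_div_iff hne]
  linarith [h]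

lemma main_key (N : ℕ) (hN : 2 ≤ N) (α : ℝ) (hα : -1 < α) :
    ∀ l : Fin N → ℝ, StrictMono l → (∀ i, 0 < l i) → (∀ i, laguerre N α (l i) = 0) →
    ∏ i, laguerre (N-1) α (l i)
      = (-1:ℝ)^(N*(N-1)/2) * ∏ i ∈ Finset.Icc 1 (N-1), ((α+i)/((N:ℝ)-i))^i := by
  induction N, hN using Nat.le_induction with
  | base =>
    intro l hmono hpos hzero
    rw [show (2:ℕ)-1 = 1 from rfl, base_case hmono hzero]
    rw [show (2*1/2 : ℕ) = 1 from rfl, Finset.Icc_self, Finset.prod_singleton]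
    norm_num
  | succ N hN2 ih =>
    intro l hmono hpos hzero
    have hinner := exists_inner_zeros hα hmono hpos hzero
    choose m hmIoo hmzero using hinner
    have hmmono : StrictMono m := by
      intro i j hij
      have h1 : m i < l i.succ := (hmIoo i).2
      have h2 : l j.castSucc < m j := (hmIoo j).1
      have h3 : l i.succ ≤ l j.castSucc := by
        apply hmono.monotone
        rw [Fin.le_def]
        simp only [Fin.val_succ, Fin.coe_castSucc]
        exact hij
      linarith
    have hmpos : ∀ i, 0 < m i := fun i => (hpos _).trans (hmIoo i).1
    have hIH := ih m hmmono hmpos hmzero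
    have hfacl := lagP_eq_prod hmono.injective hzero
    have hfacm := lagP_eq_prod hmmono.injective hmzero
    set a0 : ℝ := (-1:ℝ)^N / N.factorial with ha0
    set a1 : ℝ := (-1:ℝ)^(N+1) / ((N+1).factorial : ℝ) with ha1
    have ha1ne : a1 ≠ 0 := div_ne_zero (pow_ne_zero _ (by norm_num)) (fact_ne _)
    have hevall : ∀ i, laguerre N α (l i) = a0 * ∏ j, (l i - m j) := by
      intro i
      rw [← eval_lagP, hfacm, Polynomial.eval_mul, Polynomial.eval_C, Polynomial.eval_prod]
      simp only [Polynomial.eval_sub, Polynomial.eval_X, Polynomial.eval_C]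
    have hevalm : ∀ j, laguerre (N+1) α (m j) = a1 * ∏ i, (m j - l i) := by
      intro j
      rw [← eval_lagP, hfacl, Polynomial.eval_mul, Polynomial.eval_C, Polynomial.eval_prod]
      simp only [Polynomial.eval_sub, Polynomial.eval_X, Polynomial.eval_C]
    have hprodl : ∏ i, laguerre N α (l i) = a0^(N+1) * ∏ i, ∏ j, (l i - m j) := by
      rw [Finset.prod_congr rfl (fun i _ => hevall i), Finset.prod_mul_distrib,
        Finset.prod_const, Finset.card_univ, Fintype.card_fin]
    have hinner2 : ∀ i : Fin (N+1), ∏ j, (m j - l i) = (-1:ℝ)^N * ∏ j, (l i - m j) := by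
      intro i
      rw [show ((-1:ℝ)^N : ℝ) = ∏ _j : Fin N, (-1:ℝ) by
        rw [Finset.prod_const, Finset.card_univ, Fintype.card_fin]]
      rw [← Finset.prod_mul_distrib]
      exact Finset.prod_congr rfl (fun j _ => by ring)
    have hswap : ∏ j, ∏ i, (m j - l i) = ∏ i, ∏ j, (l i - m j) := by
      rw [Finset.prod_comm]
      rw [Finset.prod_congr rfl (fun i _ => hinner2 i)]
      rw [Finset.prod_mul_distrib, Finset.prod_const, Finset.card_univ, Fintype.card_fin,
        ← pow_mul]
      have hev : Even (N * (N+1)) := Nat.even_mul_succ_self N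
      rw [hev.neg_one_pow, one_mul]
    have hprodm : ∏ j, laguerre (N+1) α (m j) = a1^N * ∏ i, ∏ j, (l i - m j) := by
      rw [Finset.prod_congr rfl (fun j _ => hevalm j), Finset.prod_mul_distrib,
        Finset.prod_const, Finset.card_univ, Fintype.card_fin, hswap]
    have hrec : ∀ j, laguerre (N+1) α (m j)
        = (-(α+(N:ℝ))/((N:ℝ)+1)) * laguerre (N-1) α (m j) :=
      fun j => laguerre_rec_at_zero hN2 (hmzero j)
    have hprodm2 : ∏ j, laguerre (N+1) α (m j)
        = (-(α+(N:ℝ))/((N:ℝ)+1))^N * ∏ j, laguerre (N-1) α (m j) := by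
      rw [Finset.prod_congr rfl (fun j _ => hrec j), Finset.prod_mul_distrib,
        Finset.prod_const, Finset.card_univ, Fintype.card_fin]
    have hTS : a1^N * ∏ i, ∏ j, (l i - m j)
        = (-(α+(N:ℝ))/((N:ℝ)+1))^N
          * ((-1:ℝ)^(N*(N-1)/2) * ∏ i ∈ Finset.Icc 1 (N-1), ((α+(i:ℝ))/((N:ℝ)-(i:ℝ)))^i) := by
      rw [← hprodm, hprodm2, hIH]
    have e1 : N + 1 - 1 = N := rfl
    rw [e1]
    apply mul_left_cancel₀ (pow_ne_zero N ha1ne)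
    rw [show ((N+1:ℕ):ℝ) = (N:ℝ)+1 by push_cast; ring]
    rw [rhs_step N (by omega) α hα]
    rw [hprodl]
    have hcr := coeff_ratio N α
    rw [← ha0, ← ha1] at hcr
    linear_combination a0^(N+1) * hTS
      + (((-1:ℝ)^(N*(N-1)/2) * ∏ i ∈ Finset.Icc 1 (N-1), ((α+(i:ℝ))/((N:ℝ)-(i:ℝ)))^i)) * hcr

/-- `∏_{i=1}^N L_{N−1}^{(α)}(l_{N,i}) = (−1)^{N(N−1)/2} ∏_{i=1}^{N−1} ((α+i)/(N−i))^i`. -/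
theorem prod_laguerre_pred_at_zeros (N : ℕ) (hN : 2 ≤ N) (α : ℝ) (hα : -1 < α)
    (l : Fin N → ℝ) (hmono : StrictMono l) (hpos : ∀ i, 0 < l i)
    (hzero : ∀ i, laguerre N α (l i) = 0)
    (hall : ∀ x : ℝ, laguerre N α x = 0 → ∃ i, x = l i) :
    ∏ i, laguerre (N - 1) α (l i)
      = (-1 : ℝ) ^ (N * (N - 1) / 2)
          * ∏ i ∈ Finset.Icc 1 (N - 1), ((α + i) / ((N : ℝ) - i)) ^ i :=
  main_key N hN α hα l hmono hpos hzero
end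

section
/- Let N ≥ 1 and x, y ∈ ℝ^N. Then ∑_{ρ ∈ S_N} exp(∑_{i=1}^N x_{ρ(i)} y_i) = ∑_{μ} [N! / (μ! · M(μ, N))] · m_μ(x) · m_μ(y), where the sum on the right runs over all integer partitions μ with at most N parts (viewed as weakly decreasing vectors μ = (μ_1 ≥ … ≥ μ_N ≥ 0) in ℤ^N), μ! = ∏_{j=1}^N μ_j!, m_μ is the monomial symmetric polynomial in N variables indexed by μ, and M(μ, N) = N!/(l_1^μ! ⋯ l_P^μ!) is the number of distinct permutations of μ as an N-dimensional vector, l_k^μ denoting the multiplicity of the k-th distinct value among the N entries of μ (zeros included). -/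
open Finset

/-- The monomial symmetric polynomial `m_μ(x)`: the sum of the distinct monomials obtained
by permuting the exponent vector `μ`. -/
noncomputable def monoSym {N : ℕ} (μ : Fin N → ℕ) (x : Fin N → ℝ) : ℝ :=
  ∑ e ∈ Finset.image (fun σ : Equiv.Perm (Fin N) => μ ∘ σ) Finset.univ, ∏ j, x j ^ e j

/-- `M(μ, N)`: the number of distinct rearrangements of the exponent vector `μ`. -/
def numDistinctPerms {N : ℕ} (μ : Fin N → ℕ) : ℕ :=
  (Finset.image (fun σ : Equiv.Perm (Fin N) => μ ∘ σ) Finset.univ).card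

/- ### Auxiliary lemmas -/

lemma pi_tsum_prod {n : ℕ} (f : Fin n → ℕ → ℝ)
    (hf : ∀ i, Summable fun k => ‖f i k‖) :
    Summable (fun e : Fin n → ℕ => ‖∏ i, f i (e i)‖) ∧
      (∏ i, ∑' k, f i k) = ∑' e : Fin n → ℕ, ∏ i, f i (e i) := by
  induction n with
  | zero =>
    constructor
    · exact .of_finite
    · simp only [Finset.univ_eq_empty, Finset.prod_empty]
      have : ∑' _ : Fin 0 → ℕ, (1 : ℝ) = 1 := by
        rw [tsum_eq_single (Fin.elim0 : Fin 0 → ℕ)]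
        intro b hb; exact absurd (Subsingleton.elim b _) hb
      exact this.symm
  | succ n IH =>
    obtain ⟨IHs, IHe⟩ := IH (fun i => f i.succ) (fun i => hf i.succ)
    set G : (Fin n → ℕ) → ℝ := fun e => ∏ i, f i.succ (e i) with hG
    set f0 : ℕ → ℝ := f 0 with hf0
    have h0 : Summable fun k => ‖f0 k‖ := hf 0
    have hmul : Summable fun p : ℕ × (Fin n → ℕ) => ‖f0 p.1 * G p.2‖ :=
      h0.mul_norm IHs
    have hkey : ∀ p : ℕ × (Fin n → ℕ),
        ∏ i, f i ((Fin.consEquiv (fun _ => ℕ)) p i) = f0 p.1 * G p.2 := by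
      intro p
      rw [Fin.prod_univ_succ, hG, hf0]
      simp [Fin.consEquiv]
    constructor
    · rw [← (Fin.consEquiv (fun _ => ℕ)).summable_iff]
      refine hmul.congr fun p => ?_
      rw [Function.comp_apply]
      rw [hkey p]
    · rw [Fin.prod_univ_succ, IHe]
      rw [show (∑' k, f 0 k) = ∑' k, f0 k from rfl]
      rw [tsum_mul_tsum_of_summable_norm h0 IHs,
        ← (Fin.consEquiv (fun _ => ℕ)).tsum_eq]
      exact tsum_congr fun p => (hkey p).symm

noncomputable def sortA {N : ℕ} (e : Fin N → ℕ) : Fin N → ℕ :=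
  fun j => e (Tuple.sort e j.rev)

lemma antitone_sortA {N : ℕ} (e : Fin N → ℕ) : Antitone (sortA e) := by
  intro a b hab
  exact Tuple.monotone_sort e (show b.rev ≤ a.rev from Fin.rev_le_rev.mpr hab)

lemma sortA_comp_perm {N : ℕ} (e : Fin N → ℕ) (σ : Equiv.Perm (Fin N)) :
    sortA (e ∘ σ) = sortA e := by
  funext j
  exact congrFun (Tuple.comp_perm_comp_sort_eq_comp_sort (f := e) (σ := σ)) j.rev

lemma sortA_eq_self {N : ℕ} {μ : Fin N → ℕ} (hμ : Antitone μ) : sortA μ = μ := by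
  have hm : Monotone (μ ∘ ⇑(Fin.revPerm : Equiv.Perm (Fin N))) := by
    intro a b hab
    exact hμ (Fin.rev_le_rev.mpr hab)
  have h2 : μ ∘ ⇑(Fin.revPerm : Equiv.Perm (Fin N)) = μ ∘ ⇑(Tuple.sort μ) :=
    Tuple.comp_sort_eq_comp_iff_monotone.mpr hm
  funext j
  have := congrFun h2.symm j.rev
  simpa [sortA, Fin.rev_rev] using this

lemma mem_orbit_iff {N : ℕ} {μ e : Fin N → ℕ} (hμ : Antitone μ) :
    e ∈ Finset.image (fun σ : Equiv.Perm (Fin N) => μ ∘ σ) Finset.univ ↔ sortA e = μ := by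
  constructor
  · intro h
    obtain ⟨σ, -, rfl⟩ := Finset.mem_image.mp h
    rw [sortA_comp_perm, sortA_eq_self hμ]
  · intro h
    refine Finset.mem_image.mpr
      ⟨(Tuple.sort e * (Fin.revPerm : Equiv.Perm (Fin N)))⁻¹, Finset.mem_univ _, ?_⟩
    funext j
    have hμe : ∀ k, μ k = e ((Tuple.sort e * (Fin.revPerm : Equiv.Perm (Fin N))) k) := by
      intro k
      rw [← h]
      simp [sortA, Equiv.Perm.mul_apply]
    simp only [Function.comp_apply, hμe, Equiv.Perm.coe_inv, Equiv.apply_symm_apply]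

lemma card_fiber_eq {N : ℕ} (μ : Fin N → ℕ) (σ : Equiv.Perm (Fin N)) :
    (Finset.univ.filter fun ρ : Equiv.Perm (Fin N) => μ ∘ ⇑ρ = μ ∘ ⇑σ).card
      = (Finset.univ.filter fun ρ : Equiv.Perm (Fin N) => μ ∘ ⇑ρ = μ).card := by
  apply Finset.card_bij' (fun ρ _ => ρ * σ⁻¹) (fun ρ _ => ρ * σ)
  · intro ρ hρ
    simp only [Finset.mem_filter, Finset.mem_univ, true_and] at hρ ⊢
    funext j
    have := congrFun hρ (σ⁻¹ j)
    simpa using this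
  · intro ρ hρ
    simp only [Finset.mem_filter, Finset.mem_univ, true_and] at hρ ⊢
    funext j
    have := congrFun hρ (σ j)
    simpa using this
  · intro ρ _; group
  · intro ρ _; group

lemma factorial_eq_card_mul {N : ℕ} (μ : Fin N → ℕ) :
    N.factorial = (numDistinctPerms μ)
      * (Finset.univ.filter fun ρ : Equiv.Perm (Fin N) => μ ∘ ⇑ρ = μ).card := by
  have h := Finset.card_eq_sum_card_image (fun σ : Equiv.Perm (Fin N) => μ ∘ ⇑σ)
    Finset.univ
  rw [Finset.card_univ, Fintype.card_perm, Fintype.card_fin] at h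
  rw [h, numDistinctPerms]
  rw [Finset.sum_congr rfl (fun b hb => ?_), Finset.sum_const, smul_eq_mul]
  obtain ⟨σ, -, rfl⟩ := Finset.mem_image.mp hb
  exact card_fiber_eq μ σ

lemma perm_sum_pow_eq {N : ℕ} (μ : Fin N → ℕ) (x : Fin N → ℝ) :
    ∑ ρ : Equiv.Perm (Fin N), ∏ i, x (ρ i) ^ μ i
      = ((Finset.univ.filter fun ρ : Equiv.Perm (Fin N) => μ ∘ ⇑ρ = μ).card : ℝ)
        * monoSym μ x := by
  have h1 : ∀ ρ : Equiv.Perm (Fin N), ∏ i, x (ρ i) ^ μ i = ∏ j, x j ^ ((μ ∘ ⇑ρ⁻¹) j) := by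
    intro ρ
    rw [← Equiv.prod_comp ρ (fun j => x j ^ ((μ ∘ ⇑ρ⁻¹) j))]
    refine Finset.prod_congr rfl fun i _ => ?_
    simp
  simp_rw [h1]
  have h2 : ∑ ρ : Equiv.Perm (Fin N), ∏ j, x j ^ ((μ ∘ ⇑ρ⁻¹) j)
      = ∑ ρ : Equiv.Perm (Fin N), ∏ j, x j ^ ((μ ∘ ⇑ρ) j) :=
    Fintype.sum_equiv (Equiv.inv (Equiv.Perm (Fin N))) _ _ (fun ρ => rfl)
  rw [h2]
  rw [Finset.sum_comp (fun e : Fin N → ℕ => ∏ j, x j ^ e j)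
    (fun ρ : Equiv.Perm (Fin N) => μ ∘ ⇑ρ)]
  rw [monoSym, Finset.mul_sum]
  refine Finset.sum_congr rfl fun b hb => ?_
  obtain ⟨σ, -, rfl⟩ := Finset.mem_image.mp hb
  rw [card_fiber_eq μ σ, nsmul_eq_mul]

lemma orbit_sum {N : ℕ} {μ : Fin N → ℕ} (hμ : Antitone μ) (x y : Fin N → ℝ) :
    ∑ e ∈ Finset.image (fun σ : Equiv.Perm (Fin N) => μ ∘ σ) Finset.univ,
      ∑ ρ : Equiv.Perm (Fin N), ∏ i, (x (ρ i) * y i) ^ e i / ((e i).factorial : ℝ)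
    = (N.factorial : ℝ) / ((∏ j, ((μ j).factorial : ℝ)) * (numDistinctPerms μ : ℝ))
        * monoSym μ x * monoSym μ y := by
  have hterm : ∀ (ρ : Equiv.Perm (Fin N)) (e : Fin N → ℕ),
      ∏ i, (x (ρ i) * y i) ^ e i / ((e i).factorial : ℝ)
        = (∏ i, x (ρ i) ^ e i) * (∏ i, y i ^ e i) / ∏ i, ((e i).factorial : ℝ) := by
    intro ρ e
    simp_rw [mul_pow]
    rw [Finset.prod_div_distrib, Finset.prod_mul_distrib]
  have hinner : ∀ e ∈ Finset.image (fun σ : Equiv.Perm (Fin N) => μ ∘ σ) Finset.univ,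
      ∑ ρ : Equiv.Perm (Fin N), ∏ i, (x (ρ i) * y i) ^ e i / ((e i).factorial : ℝ)
        = (∑ ρ : Equiv.Perm (Fin N), ∏ i, x (ρ i) ^ μ i) * (∏ i, y i ^ e i)
            / ∏ j, ((μ j).factorial : ℝ) := by
    intro e he
    obtain ⟨σ, -, rfl⟩ := Finset.mem_image.mp he
    have hfact : ∏ i, (((μ ∘ ⇑σ) i).factorial : ℝ) = ∏ j, ((μ j).factorial : ℝ) :=
      Equiv.prod_comp σ (fun j => ((μ j).factorial : ℝ))
    have hxsum : ∑ ρ : Equiv.Perm (Fin N), ∏ i, x (ρ i) ^ ((μ ∘ ⇑σ) i)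
        = ∑ ρ : Equiv.Perm (Fin N), ∏ i, x (ρ i) ^ μ i := by
      refine Fintype.sum_equiv (Equiv.mulRight σ⁻¹) _ _ (fun ρ => ?_)
      rw [Equiv.coe_mulRight,
        ← Equiv.prod_comp σ (fun i => x ((ρ * σ⁻¹) i) ^ μ i)]
      refine Finset.prod_congr rfl fun i _ => ?_
      simp [Equiv.Perm.mul_apply]
    rw [Finset.sum_congr rfl fun ρ _ => hterm ρ (μ ∘ ⇑σ)]
    rw [← Finset.sum_div, ← Finset.sum_mul, hfact, hxsum]
  rw [Finset.sum_congr rfl hinner, ← Finset.sum_div, ← Finset.mul_sum]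
  rw [show (∑ e ∈ Finset.image (fun σ : Equiv.Perm (Fin N) => μ ∘ σ) Finset.univ,
      ∏ j, y j ^ e j) = monoSym μ y from rfl]
  rw [perm_sum_pow_eq]
  have hM : (numDistinctPerms μ : ℝ) ≠ 0 := by
    have : μ ∈ Finset.image (fun σ : Equiv.Perm (Fin N) => μ ∘ σ) Finset.univ :=
      Finset.mem_image.mpr ⟨1, Finset.mem_univ _, by ext j; simp⟩
    have hpos : 0 < numDistinctPerms μ := Finset.card_pos.mpr ⟨μ, this⟩
    exact_mod_cast hpos.ne'
  have hD : (∏ j, ((μ j).factorial : ℝ)) ≠ 0 := by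
    refine Finset.prod_ne_zero_iff.mpr fun j _ => ?_
    exact_mod_cast (Nat.factorial_pos (μ j)).ne'
  have hNf : (N.factorial : ℝ)
      = (numDistinctPerms μ : ℝ)
        * ((Finset.univ.filter fun ρ : Equiv.Perm (Fin N) => μ ∘ ⇑ρ = μ).card : ℝ) := by
    exact_mod_cast congrArg (Nat.cast (R := ℝ)) (factorial_eq_card_mul μ)
  rw [hNf]
  field_simp


/-- `∑_{ρ∈S_N} exp(∑ x_{ρ(i)} y_i) = ∑_μ N!/(μ!·M(μ,N)) · m_μ(x) m_μ(y)`, the sum running over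
all partitions `μ` with at most `N` parts (weakly decreasing vectors in `ℕ^N`). -/
theorem perm_sum_exp_eq_monoSym_expansion (N : ℕ) (hN : 1 ≤ N) (x y : Fin N → ℝ) :
    ∑ ρ : Equiv.Perm (Fin N), Real.exp (∑ i, x (ρ i) * y i)
      = ∑' μ : {μ : Fin N → ℕ // Antitone μ},
          (Nat.factorial N : ℝ)
              / ((∏ j, (Nat.factorial (μ.1 j) : ℝ)) * (numDistinctPerms μ.1 : ℝ))
            * monoSym μ.1 x * monoSym μ.1 y := by
  classical
  have hnorm : ∀ (ρ : Equiv.Perm (Fin N)) (i : Fin N),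
      Summable fun k => ‖(x (ρ i) * y i) ^ k / (k.factorial : ℝ)‖ := by
    intro ρ i
    refine (Real.summable_pow_div_factorial |x (ρ i) * y i|).congr fun k => ?_
    rw [norm_div, norm_pow, Real.norm_eq_abs, Real.norm_natCast]
  have hps := fun ρ : Equiv.Perm (Fin N) =>
    pi_tsum_prod (fun i k => (x (ρ i) * y i) ^ k / (k.factorial : ℝ)) (hnorm ρ)
  have hsum_h : ∀ ρ : Equiv.Perm (Fin N),
      Summable (fun e : Fin N → ℕ =>
        ∏ i, (x (ρ i) * y i) ^ e i / ((e i).factorial : ℝ)) :=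
    fun ρ => ((hps ρ).1).of_norm
  have hexp : ∀ ρ : Equiv.Perm (Fin N), Real.exp (∑ i, x (ρ i) * y i)
      = ∑' e : Fin N → ℕ, ∏ i, (x (ρ i) * y i) ^ e i / ((e i).factorial : ℝ) := by
    intro ρ
    rw [Real.exp_sum, ← (hps ρ).2]
    refine Finset.prod_congr rfl fun i _ => ?_
    rw [Real.exp_eq_exp_ℝ, NormedSpace.exp_eq_tsum_div]
  rw [Finset.sum_congr rfl fun ρ _ => hexp ρ]
  set F : (Fin N → ℕ) → ℝ :=
    fun e => ∑ ρ : Equiv.Perm (Fin N), ∏ i, (x (ρ i) * y i) ^ e i / ((e i).factorial : ℝ)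
    with hF
  have hFs : Summable F := summable_sum fun ρ _ => hsum_h ρ
  have hswap : ∑ ρ : Equiv.Perm (Fin N),
      ∑' e : Fin N → ℕ, ∏ i, (x (ρ i) * y i) ^ e i / ((e i).factorial : ℝ)
      = ∑' e, F e := (Summable.tsum_finsetSum fun ρ _ => hsum_h ρ).symm
  rw [hswap]
  set S : (Fin N → ℕ) → {μ : Fin N → ℕ // Antitone μ} :=
    fun e => ⟨sortA e, antitone_sortA e⟩ with hS
  have hfib := hFs.hasSum.tsum_fiberwise S
  rw [← hfib.tsum_eq]
  refine tsum_congr fun μ => ?_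
  have hset : S ⁻¹' {μ}
      = (↑(Finset.image (fun σ : Equiv.Perm (Fin N) => μ.1 ∘ σ) Finset.univ)
          : Set (Fin N → ℕ)) := by
    ext e
    simp only [Set.mem_preimage, Set.mem_singleton_iff, Finset.mem_coe]
    rw [mem_orbit_iff μ.2]
    constructor
    · intro h; exact congrArg Subtype.val h
    · intro h; exact Subtype.ext h
  rw [hset, Finset.tsum_subtype']
  exact orbit_sum μ.2 x y
end
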